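/- arXiv:2601.10235 — 4 statements merged into one kernel-verified Lean document; each statement's English description precedes it below -/
import Mathlib

section
/- Proposition (every converging orbit enters U). Let ε > 0 and θ ∈ (0,π/2) be small enough (as in the invariance proposition for U). Let x ∈ ℂⁿ be a point whose orbit under f is defined for all times and satisfies f^{∘j}(x) → 0 as j → +∞. Then there exists j₀ ∈ ℕ such that for all j ≥ j₀, f^{∘j}(x) ∈ U(ε,θ). -/
/-!
Every converging orbit enters `U`: for `ε > 0` and `θ ∈ (0,π/2)` small enough (as in the
invariance proposition for `U`), if the orbit of `x` under `f` converges to `0` (and is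
not eventually the fixed point `0` itself), then it eventually lies in `U(ε,θ)`.
-/

noncomputable section

open Complex Filter Topology Set Function

/-- The monomial `x^M = x_1^{M_1} ⋯ x_n^{M_n}`. -/
def monom {n : ℕ} (M : Fin n → ℕ) (x : Fin n → ℂ) : ℂ := ∏ i, x i ^ M i

/-- The sector `C(ε,θ) = {z ∈ ℂ* : |z| < ε, |arg z| < θ}`. -/
def sectC (ε θ : ℝ) : Set ℂ := {z | z ≠ 0 ∧ ‖z‖ < ε ∧ |Complex.arg z| < θ}

/-- The domain `U(ε,θ) = {x : x^M ∈ C(ε,θ), |x_i| < |x^m|^γ ∀ i}`. -/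
def Uset {n : ℕ} (M m : Fin n → ℕ) (γ ε θ : ℝ) : Set (Fin n → ℂ) :=
  {x | monom M x ∈ sectC ε θ ∧ ∀ i, ‖x i‖ < ‖monom m x‖ ^ γ}

lemma abs_one_add_le (ζ : ℂ) :
    ‖1 + ζ‖ ≤ Real.exp (ζ.re + ‖ζ‖ ^ 2) := by
  have h1 : ‖1 + ζ‖ ^ 2 = 1 + (2 * ζ.re + ‖ζ‖ ^ 2) := by
    rw [← Complex.normSq_eq_norm_sq, ← Complex.normSq_eq_norm_sq]
    simp [Complex.normSq_apply, Complex.add_re, Complex.add_im]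
    ring
  have h2 : ‖1 + ζ‖ ^ 2 ≤ Real.exp (ζ.re + ‖ζ‖ ^ 2) ^ 2 := by
    rw [h1, ← Real.exp_nat_mul]
    calc 1 + (2 * ζ.re + ‖ζ‖ ^ 2) ≤ Real.exp (2 * ζ.re + ‖ζ‖ ^ 2) := by
          linarith [Real.add_one_le_exp (2 * ζ.re + ‖ζ‖ ^ 2)]
      _ ≤ Real.exp ((2:ℕ) * (ζ.re + ‖ζ‖ ^ 2)) := by
          apply Real.exp_le_exp.2; push_cast
          nlinarith [sq_nonneg (‖ζ‖)]
  exact pow_le_pow_iff_left₀ (norm_nonneg _) (Real.exp_pos _).le two_ne_zero |>.1 h2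

lemma tendsto_prod_sub_one_div {ι : Type*} (s : Finset ι)
    (P : ι → ℕ → ℂ) (u : ℕ → ℂ) (L : ι → ℂ)
    (h1 : ∀ i ∈ s, Tendsto (P i) atTop (𝓝 1))
    (h2 : ∀ i ∈ s, Tendsto (fun j => (P i j - 1) / u j) atTop (𝓝 (L i))) :
    Tendsto (fun j => ((∏ i ∈ s, P i j) - 1) / u j) atTop (𝓝 (∑ i ∈ s, L i)) := by
  induction s using Finset.cons_induction with
  | empty => simp only [Finset.prod_empty, sub_self, zero_div, Finset.sum_empty]
             exact tendsto_const_nhds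
  | cons c s hc ih =>
    have key : ∀ j, ((∏ i ∈ Finset.cons c s hc, P i j) - 1) / u j
        = P c j * (((∏ i ∈ s, P i j) - 1) / u j) + (P c j - 1) / u j := by
      intro j; rw [Finset.prod_cons]; ring
    simp only [key, Finset.sum_cons]
    have hP1 := h1 c (Finset.mem_cons_self c s)
    have hP2 := h2 c (Finset.mem_cons_self c s)
    have ih' := ih (fun i hi => h1 i (Finset.mem_cons_of_mem hi))
      (fun i hi => h2 i (Finset.mem_cons_of_mem hi))
    have := (hP1.mul ih').add hP2
    rwa [one_mul, add_comm] at this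

lemma harmonic_lb (J : ℕ) (hJ : 1 ≤ J) : ∀ j, J ≤ j →
    Real.log j - Real.log J ≤ ∑ k ∈ Finset.Ico J j, (1 / (k:ℝ)) := by
  intro j hj
  induction j, hj using Nat.le_induction with
  | base => simp
  | succ j hj ih =>
    rw [Finset.sum_Ico_succ_top hj]
    have hjpos : (0:ℝ) < j := by
      have : (1:ℝ) ≤ (j:ℝ) := by exact_mod_cast hJ.trans hj
      linarith
    have key : Real.log ((j:ℝ)+1) - Real.log j ≤ 1 / (j:ℝ) := by
      rw [← Real.log_div (by linarith) (by linarith)]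
      have h := Real.log_le_sub_one_of_pos (x := ((j:ℝ)+1)/j) (by positivity)
      have : ((j:ℝ)+1)/j - 1 = 1 / j := by field_simp; ring
      linarith
    push_cast
    linarith

theorem converging_orbit_enters_U
    {n : ℕ} [NeZero n]
    (M : Fin n → ℕ) (hM : M ≠ 0)
    (a : Fin n → ℂ) (ha : ∀ i, a i ≠ 0)
    (A : Fin n → (Fin n → ℂ) → ℂ)
    (hAan : ∀ i, AnalyticAt ℂ (A i) 0) (hA0 : ∀ i, A i 0 = 0)
    (f : (Fin n → ℂ) → (Fin n → ℂ))
    (hf : ∀ᶠ x in 𝓝 (0 : Fin n → ℂ), ∀ i, f x i = x i * (1 + monom M x * (a i + A i x)))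
    (hnorm : ∑ i, a i * (M i : ℂ) = -1)
    (d : ℕ) (hd : d = Finset.univ.gcd M)
    (m : Fin n → ℕ) (hm : ∀ i, M i = d * m i)
    (hre : ∀ i, (a i).re < 0)
    (γ : ℝ) (hγ : 0 < γ) (hγ' : ∀ i, (a i).re + γ / (d : ℝ) < 0) :
    ∀ θ, 0 < θ → θ < Real.pi / 2 →
      ∃ ε₀ > 0, ∀ ε, 0 < ε → ε ≤ ε₀ →
        ∀ x : Fin n → ℂ, (∀ j : ℕ, f^[j] x ≠ 0) →
          Tendsto (fun j => f^[j] x) atTop (𝓝 0) →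
          ∃ j₀ : ℕ, ∀ j, j₀ ≤ j → f^[j] x ∈ Uset M m γ ε θ := by
  intro θ hθ0 hθπ
  refine ⟨1, one_pos, fun ε hε hε1 x hx htend => ?_⟩
  set y : ℕ → (Fin n → ℂ) := fun j => f^[j] x with hydef
  set z : ℕ → ℂ := fun j => monom M (y j) with hzdef
  -- basic positivity of d
  have hd0 : d ≠ 0 := by
    intro h
    apply hM
    funext i
    have h' : Finset.univ.gcd M = 0 := by rw [← hd, h]
    exact Finset.gcd_eq_zero_iff.1 h' i (Finset.mem_univ i)
  have hdR : (0:ℝ) < (d:ℝ) := by exact_mod_cast Nat.pos_of_ne_zero hd0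
  -- z tends to 0
  have hMcont : Continuous (monom M) := by
    unfold monom
    exact continuous_finset_prod _ fun i _ => (continuous_apply i).pow _
  have hM0 : monom M (0 : Fin n → ℂ) = 0 := by
    obtain ⟨i0, hi0⟩ : ∃ i, M i ≠ 0 := by
      by_contra h; push_neg at h; exact hM (funext h)
    exact Finset.prod_eq_zero (Finset.mem_univ i0) (by simp [zero_pow hi0])
  have hz0 : Tendsto z atTop (𝓝 0) := by
    have := (hMcont.tendsto 0).comp htend
    rwa [hM0] at this
  -- the recurrence for the orbit, eventually
  have hrec : ∀ᶠ j in atTop, ∀ i, y (j+1) i = y j i * (1 + z j * (a i + A i (y j))) := by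
    filter_upwards [htend.eventually hf] with j hj i
    have hstep : y (j+1) = f (y j) := Function.iterate_succ_apply' f j x
    rw [hstep, hj i]
  obtain ⟨N₀, hN₀⟩ := eventually_atTop.1 hrec
  -- z is nonzero on the tail
  have hzne : ∀ j, N₀ ≤ j → z j ≠ 0 := by
    intro j hj hzj
    have hconst : ∀ k, j ≤ k → y k = y j := by
      intro k hk
      induction k, hk using Nat.le_induction with
      | base => rfl
      | succ k hk ih =>
        funext i
        have hzk : z k = 0 := by rw [hzdef]; simp only; rw [ih]; exact hzj
        rw [hN₀ k (hj.trans hk) i, hzk, ih]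
        ring
    have hyj0 : y j = 0 := by
      have heq : (fun k => y k) =ᶠ[atTop] (fun _ => y j) :=
        eventually_atTop.2 ⟨j, hconst⟩
      exact tendsto_nhds_unique tendsto_const_nhds (htend.congr' heq)
    exact hx j hyj0
  have hzneE : ∀ᶠ j in atTop, z j ≠ 0 := eventually_atTop.2 ⟨N₀, hzne⟩
  -- a i + A i (y j) → a i
  have hc : ∀ i, Tendsto (fun j => a i + A i (y j)) atTop (𝓝 (a i)) := by
    intro i
    have h1 : Tendsto (fun j => A i (y j)) atTop (𝓝 0) := by
      have := ((hAan i).continuousAt.tendsto).comp htend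
      rwa [hA0 i] at this
    simpa using tendsto_const_nhds.add h1
  -- q j
  set q : ℕ → ℂ := fun j => ∏ i, (1 + z j * (a i + A i (y j))) ^ M i with hqdef
  have hfac1 : ∀ i, Tendsto (fun j => 1 + z j * (a i + A i (y j))) atTop (𝓝 1) := by
    intro i
    have := (tendsto_const_nhds (x := (1:ℂ))).add (hz0.mul (hc i))
    simpa using this
  have hinner : ∀ i, Tendsto (fun j => ((1 + z j * (a i + A i (y j))) ^ M i - 1) / z j)
      atTop (𝓝 ((M i : ℂ) * a i)) := by
    intro i
    have h := tendsto_prod_sub_one_div (Finset.range (M i))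
      (fun _ j => 1 + z j * (a i + A i (y j))) z (fun _ => a i)
      (fun _ _ => hfac1 i)
      (fun _ _ => by
        refine (hc i).congr' ?_
        filter_upwards [hzneE] with j hj
        field_simp
        ring)
    simpa [Finset.prod_const, Finset.card_range, nsmul_eq_mul] using h
  have hq : Tendsto (fun j => (q j - 1) / z j) atTop (𝓝 (-1)) := by
    have h := tendsto_prod_sub_one_div Finset.univ
      (fun i j => (1 + z j * (a i + A i (y j))) ^ M i) z (fun i => (M i : ℂ) * a i)
      (fun i _ => by simpa using (hfac1 i).pow (M i))
      (fun i _ => hinner i)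
    have hsum : ∑ i, (M i : ℂ) * a i = -1 := by
      rw [← hnorm]
      exact Finset.sum_congr rfl fun i _ => mul_comm _ _
    rw [hsum] at h
    exact h
  have hq1 : Tendsto q atTop (𝓝 1) := by
    have := tendsto_finset_prod (Finset.univ : Finset (Fin n))
      (f := fun i j => (1 + z j * (a i + A i (y j))) ^ M i)
      (a := fun _ => (1:ℂ)) (fun i _ => by simpa using (hfac1 i).pow (M i))
    simpa using this
  -- z recurrence
  have hE4 : ∀ j, N₀ ≤ j → z (j+1) = z j * q j := by
    intro j hj
    have hr := hN₀ j hj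
    show monom M (y (j+1)) = _
    unfold monom
    calc (∏ i, y (j+1) i ^ M i)
        = ∏ i, (y j i ^ M i * (1 + z j * (a i + A i (y j))) ^ M i) := by
          refine Finset.prod_congr rfl fun i _ => ?_
          rw [hr i, mul_pow]
      _ = z j * q j := by rw [Finset.prod_mul_distrib]; rfl
  have hqne : ∀ j, N₀ ≤ j → q j ≠ 0 := by
    intro j hj h0
    exact hzne (j+1) (by omega) (by rw [hE4 j hj, h0, mul_zero])
  -- w = 1/z, increments tend to 1
  set w : ℕ → ℂ := fun j => (z j)⁻¹ with hwdef
  have hΔ : Tendsto (fun j => w (j+1) - w j) atTop (𝓝 1) := by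
    have hlim := (hq.neg).div hq1 one_ne_zero
    rw [show -(-1 : ℂ)/1 = 1 by norm_num] at hlim
    refine hlim.congr' ?_
    filter_upwards [eventually_ge_atTop N₀] with j hj
    have hzj := hzne j hj
    have hqj := hqne j hj
    rw [hwdef]
    simp only [Pi.div_apply]
    rw [hE4 j hj]
    field_simp
    ring
  -- Cesàro: w j / j → 1
  have hW : Tendsto (fun j : ℕ => ((j:ℝ)⁻¹ : ℝ) • w j) atTop (𝓝 1) := by
    have hces := hΔ.cesaro_smul
    have h0 : Tendsto (fun j : ℕ => ((j:ℝ)⁻¹ : ℝ) • w 0) atTop (𝓝 ((0:ℝ) • w 0)) :=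
      (tendsto_inv_atTop_nhds_zero_nat).smul_const (w 0)
    have hadd := h0.add hces
    rw [zero_smul, zero_add] at hadd
    refine hadd.congr fun j => ?_
    rw [← smul_add]
    congr 1
    rw [Finset.sum_range_sub (f := w)]
    ring
  -- j * z j → 1
  have hJZ : Tendsto (fun j : ℕ => (j:ℂ) * z j) atTop (𝓝 1) := by
    have hinv := hW.inv₀ one_ne_zero
    rw [inv_one] at hinv
    refine hinv.congr' ?_
    filter_upwards [eventually_ge_atTop (max N₀ 1)] with j hj
    have hzj := hzne j (le_trans (le_max_left _ _) hj)
    have hj1 : 1 ≤ j := le_trans (le_max_right _ _) hj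
    have hjR : ((j:ℝ)) ≠ 0 := by positivity
    rw [hwdef]
    simp only
    rw [Complex.real_smul, mul_inv, inv_inv, Complex.ofReal_inv, inv_inv]
    push_cast
    ring
  -- the constants
  set δ : Fin n → ℝ := fun i => -((a i).re + γ / d) / 2 with hδdef
  have hδpos : ∀ i, 0 < δ i := by
    intro i
    have := hγ' i
    rw [hδdef]
    simp only
    linarith
  set σ : Fin n → ℝ := fun i => (a i).re + δ i with hσdef
  have hσneg : ∀ i, σ i < 0 := by
    intro i
    have h1 := hδpos i
    have h2 := hγ' i
    have h3 : 0 < γ / d := div_pos hγ hdR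
    rw [hσdef, hδdef]
    simp only
    linarith
  have hexp : ∀ i, σ i * d + γ = -(δ i * d) := by
    intro i
    rw [hσdef, hδdef]
    simp only
    field_simp
    ring
  set ζ : Fin n → ℕ → ℂ := fun i j => z j * (a i + A i (y j)) with hζdef
  have hζJ : ∀ i, Tendsto (fun j : ℕ => (j:ℂ) * ζ i j) atTop (𝓝 (a i)) := by
    intro i
    have := hJZ.mul (hc i)
    rw [one_mul] at this
    refine this.congr fun j => ?_
    rw [hζdef]; ring
  have hζ0 : ∀ i, Tendsto (fun j => ζ i j) atTop (𝓝 0) := by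
    intro i
    have := hz0.mul (hc i)
    simpa using this
  have hest : ∀ i, ∀ᶠ j : ℕ in atTop,
      (ζ i j).re + ‖ζ i j‖ ^ 2 ≤ σ i / j := by
    intro i
    have hRe : Tendsto (fun j : ℕ => (j:ℝ) * (ζ i j).re) atTop (𝓝 ((a i).re)) := by
      have := (Complex.continuous_re.tendsto _).comp (hζJ i)
      refine this.congr fun j => ?_
      simp only [Function.comp_apply]
      rw [show ((j:ℕ):ℂ) = (((j:ℕ):ℝ):ℂ) by push_cast; rfl, Complex.re_ofReal_mul]
    have hAbs : Tendsto (fun j : ℕ => (j:ℝ) * ‖ζ i j‖ ^ 2) atTop (𝓝 0) := by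
      have h1 := (continuous_norm.tendsto _).comp (hζJ i)
      have h2 := (continuous_norm.tendsto _).comp (hζ0 i)
      rw [norm_zero] at h2
      have := h1.mul h2
      rw [mul_zero] at this
      refine this.congr fun j => ?_
      simp only [Function.comp_apply, norm_mul, Complex.norm_natCast]
      ring
    have hsum := hRe.add hAbs
    rw [add_zero] at hsum
    have hlt : (a i).re < σ i := by
      rw [hσdef]; simp only; linarith [hδpos i]
    have hev : ∀ᶠ j : ℕ in atTop,
        (j:ℝ) * (ζ i j).re + (j:ℝ) * ‖ζ i j‖ ^ 2 < σ i :=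
      hsum.eventually_lt_const hlt
    filter_upwards [hev, eventually_ge_atTop 1] with j h1 hj1
    have hjpos : (0:ℝ) < j := by exact_mod_cast hj1
    rw [le_div_iff₀ hjpos]
    nlinarith
  -- fix a good starting index N
  have hbig : ∀ᶠ j : ℕ in atTop,
      (∀ i, y (j+1) i = y j i * (1 + z j * (a i + A i (y j)))) ∧ z j ≠ 0 ∧
      (∀ i, (ζ i j).re + ‖ζ i j‖ ^ 2 ≤ σ i / j) ∧ 1 ≤ j := by
    filter_upwards [hrec, hzneE, eventually_all.2 hest, eventually_ge_atTop 1] with j h1 h2 h3 h4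
    exact ⟨h1, h2, h3, h4⟩
  obtain ⟨N, hN⟩ := eventually_atTop.1 hbig
  have hNpos : 1 ≤ N := (hN N le_rfl).2.2.2
  set C : Fin n → ℝ := fun i => ‖y N i‖ * (N:ℝ) ^ (-(σ i)) with hCdef
  -- coordinate bound
  have hbound : ∀ i, ∀ j, N ≤ j → ‖y j i‖ ≤
      ‖y N i‖ * Real.exp (σ i * ∑ k ∈ Finset.Ico N j, (1/(k:ℝ))) := by
    intro i j hj
    induction j, hj using Nat.le_induction with
    | base => simp
    | succ j hj ih =>
      obtain ⟨hr, -, he, hj1⟩ := hN j hj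
      rw [Finset.sum_Ico_succ_top hj, mul_add, Real.exp_add, ← mul_assoc]
      have hjpos : (0:ℝ) < j := by exact_mod_cast hj1
      have step : ‖y (j+1) i‖ ≤ ‖y j i‖ * Real.exp (σ i * (1/(j:ℝ))) := by
        rw [hr i, norm_mul]
        refine mul_le_mul_of_nonneg_left ?_ (norm_nonneg _)
        calc ‖1 + ζ i j‖
            ≤ Real.exp ((ζ i j).re + ‖ζ i j‖ ^ 2) := abs_one_add_le _
          _ ≤ Real.exp (σ i * (1/(j:ℝ))) := by
              apply Real.exp_le_exp.2
              rw [mul_one_div]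
              exact he i
      calc ‖y (j+1) i‖ ≤ ‖y j i‖ * Real.exp (σ i * (1/(j:ℝ))) := step
        _ ≤ ‖y N i‖ * Real.exp (σ i * ∑ k ∈ Finset.Ico N j, (1/(k:ℝ)))
              * Real.exp (σ i * (1/(j:ℝ))) :=
            mul_le_mul_of_nonneg_right ih (Real.exp_pos _).le
  have hCb : ∀ i, ∀ j, N ≤ j → ‖y j i‖ ≤ C i * (j:ℝ) ^ (σ i) := by
    intro i j hj
    have hS := harmonic_lb N hNpos j hj
    have h1 := hbound i j hj
    have hσi := hσneg i
    have hjpos : (0:ℝ) < j := by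
      have : (1:ℝ) ≤ (j:ℝ) := by exact_mod_cast hNpos.trans hj
      linarith
    have hNposR : (0:ℝ) < N := by exact_mod_cast hNpos
    have h2 : σ i * ∑ k ∈ Finset.Ico N j, (1/(k:ℝ)) ≤ σ i * (Real.log j - Real.log N) := by
      exact mul_le_mul_of_nonpos_left hS hσi.le
    have h3 : ‖y j i‖ ≤ ‖y N i‖
        * Real.exp (σ i * (Real.log j - Real.log N)) := by
      calc ‖y j i‖ ≤ _ := h1
        _ ≤ _ := mul_le_mul_of_nonneg_left (Real.exp_le_exp.2 h2) (norm_nonneg _)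
    calc ‖y j i‖ ≤ _ := h3
      _ = C i * (j:ℝ) ^ (σ i) := by
          rw [hCdef]
          simp only
          rw [Real.rpow_def_of_pos hjpos, Real.rpow_def_of_pos hNposR, mul_assoc,
            ← Real.exp_add]
          congr 1
          ring
  -- final eventual statements
  have habsz : Tendsto (fun j => ‖z j‖) atTop (𝓝 0) := by
    have := (continuous_norm.tendsto _).comp hz0
    rwa [norm_zero] at this
  have hg1 : ∀ᶠ j : ℕ in atTop, ‖z j‖ < ε := habsz.eventually_lt_const hε
  have harg : Tendsto (fun j : ℕ => Complex.arg ((j:ℂ) * z j)) atTop (𝓝 0) := by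
    have hcont : ContinuousAt Complex.arg 1 :=
      Complex.continuousAt_arg (by simp [Complex.mem_slitPlane_iff])
    have := hcont.tendsto.comp hJZ
    rwa [Complex.arg_one] at this
  have hg2 : ∀ᶠ j : ℕ in atTop, |Complex.arg (z j)| < θ := by
    have habs : Tendsto (fun j : ℕ => |Complex.arg ((j:ℂ) * z j)|) atTop (𝓝 0) := by
      have := (_root_.continuous_abs.tendsto _).comp harg
      rwa [abs_zero] at this
    filter_upwards [habs.eventually_lt_const hθ0, eventually_ge_atTop 1] with j hj hj1
    have hjpos : (0:ℝ) < j := by exact_mod_cast hj1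
    rwa [show ((j:ℕ):ℂ) = (((j:ℕ):ℝ):ℂ) by push_cast; rfl,
      Complex.arg_real_mul _ hjpos] at hj
  have habsJZ : Tendsto (fun j : ℕ => (j:ℝ) * ‖z j‖) atTop (𝓝 1) := by
    have := (continuous_norm.tendsto _).comp hJZ
    rw [norm_one] at this
    refine this.congr fun j => ?_
    simp [norm_mul, Complex.norm_natCast]
  have hg5 : ∀ᶠ j : ℕ in atTop, (2*(j:ℝ))⁻¹ < ‖z j‖ := by
    filter_upwards [habsJZ.eventually_const_lt (by norm_num : (1:ℝ)/2 < 1),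
      eventually_ge_atTop 1] with j hj hj1
    have hjpos : (0:ℝ) < j := by exact_mod_cast hj1
    rw [show (2*(j:ℝ))⁻¹ = 1/(2*(j:ℝ)) by rw [one_div], div_lt_iff₀ (by positivity)]
    nlinarith
  have hg4 : ∀ i, ∀ᶠ j : ℕ in atTop,
      (C i)^d * (2:ℝ)^γ * (j:ℝ)^(σ i * d + γ) < 1 := by
    intro i
    have hrp : Tendsto (fun j : ℕ => (j:ℝ)^(σ i * d + γ)) atTop (𝓝 0) := by
      rw [hexp i]
      exact (tendsto_rpow_neg_atTop (mul_pos (hδpos i) hdR)).comp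
        tendsto_natCast_atTop_atTop
    have := (tendsto_const_nhds (x := (C i)^d * (2:ℝ)^γ)).mul hrp
    rw [mul_zero] at this
    exact this.eventually_lt_const one_pos
  -- put it together
  have hfinal : ∀ᶠ j : ℕ in atTop, f^[j] x ∈ Uset M m γ ε θ := by
    filter_upwards [eventually_ge_atTop N, hg1, hg2, hg5, eventually_all.2 hg4]
      with j hjN h1 h2 h5 h4
    have hzj : z j ≠ 0 := (hN j hjN).2.1
    have hjR1 : (1:ℝ) ≤ (j:ℝ) := by exact_mod_cast hNpos.trans hjN
    have hjpos : (0:ℝ) < j := by linarith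
    constructor
    · exact ⟨hzj, h1, h2⟩
    · intro i
      have hmonom : monom M (y j) = (monom m (y j))^d := by
        unfold monom
        rw [← Finset.prod_pow]
        exact Finset.prod_congr rfl fun i _ => by rw [hm i, mul_comm, pow_mul]
      set r := ‖monom m (y j)‖ with hrdef
      have hrpos : 0 < r := by
        have hne : monom m (y j) ≠ 0 := by
          intro h
          apply hzj
          show monom M (y j) = 0
          rw [hmonom, h, zero_pow hd0]
        exact norm_pos_iff.2 hne
      have hzr : ‖z j‖ = r ^ d := by
        show ‖monom M (y j)‖ = r ^ d
        rw [hmonom, norm_pow]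
      have key : ‖y j i‖ ^ d < (r ^ γ) ^ d := by
        have e1 : (r ^ γ)^d = ‖z j‖ ^ γ := by
          rw [hzr, ← Real.rpow_natCast (r^γ) d, ← Real.rpow_natCast r d,
            ← Real.rpow_mul hrpos.le, ← Real.rpow_mul hrpos.le, mul_comm]
        rw [e1]
        have step1 : ‖y j i‖ ^ d ≤ (C i * (j:ℝ)^(σ i))^d :=
          pow_le_pow_left₀ (norm_nonneg _) (hCb i j hjN) d
        have step2 : (C i * (j:ℝ)^(σ i))^d = C i ^ d * (j:ℝ)^(σ i * d) := by
          rw [mul_pow, ← Real.rpow_natCast ((j:ℝ)^(σ i)) d, ← Real.rpow_mul hjpos.le]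
        have step3 : C i ^ d * (j:ℝ)^(σ i * d) < ‖z j‖ ^ γ := by
          have h2j : ((2*(j:ℝ))⁻¹)^γ ≤ ‖z j‖ ^ γ :=
            Real.rpow_le_rpow (by positivity) (h5).le hγ.le
          have hlhs : C i ^ d * (j:ℝ)^(σ i * d) < ((2*(j:ℝ))⁻¹)^γ := by
            have hpos2j : (0:ℝ) < 2*(j:ℝ) := by linarith
            rw [Real.inv_rpow hpos2j.le, inv_eq_one_div, lt_div_iff₀ (by positivity)]
            have hrw : C i ^ d * (j:ℝ)^(σ i * (d:ℝ)) * (2*(j:ℝ))^γ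
                = C i ^ d * (2:ℝ)^γ * (j:ℝ)^(σ i * (d:ℝ) + γ) := by
              rw [Real.mul_rpow (by norm_num) hjpos.le, Real.rpow_add hjpos]
              ring
            rw [hrw]
            exact h4 i
          exact hlhs.trans_le h2j
        calc ‖y j i‖ ^ d ≤ (C i * (j:ℝ)^(σ i))^d := step1
          _ = C i ^ d * (j:ℝ)^(σ i * d) := step2
          _ < ‖z j‖ ^ γ := step3
      by_contra hcon
      push_neg at hcon
      exact absurd key (not_lt.2 (pow_le_pow_left₀ (by positivity) hcon d))
  obtain ⟨j₀, hj₀⟩ := eventually_atTop.1 hfinal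
  exact ⟨j₀, hj₀⟩
end
end

section
/- Invertibility of the model map φ. The map φ : U_0 → ℂⁿ defined by φ(x) = (1/x^M, g_{𝓜_2}(x),…,g_{𝓜_n}(x)) is injective with holomorphic inverse on its image, and its inverse is given coordinatewise by φ^{−1}_i(z,w) = z^{a_i}·w^{𝓝_i}, where w^{𝓝_i} = ∏_{j=2}^{n} w_j^{𝓝_{i,j}} and z^{a_i} is defined by the branch of the logarithm determined by |arg z| < θ; in particular the exponent of z in φ^{−1}_i equals a_i. -/
/-!
Invertibility of the model map `φ(x) = (1/x^M, g_{𝓜_2}(x), …, g_{𝓜_n}(x))` on `U_0`: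
`φ` is injective on `U_0`, its inverse is given coordinatewise by
`φ⁻¹_i(z,w) = z^{a_i} · ∏_{j≥2} w_j^{𝓝_{i,j}}` (principal branch, legitimate since
`|arg z| < θ` on the image), and this inverse is holomorphic on the image; in particular
the exponent of `z` in `φ⁻¹_i` is `a_i`.
-/

noncomputable section

open Complex Filter Topology Set Function

/-- The connected component `U_0` of `U(ε,θ)` on which `arg(x^m)` is close to `0`. -/
def U0set {n : ℕ} (M m : Fin n → ℕ) (d : ℕ) (γ ε θ : ℝ) : Set (Fin n → ℂ) :=
  {x | monom M x ∈ sectC ε θ ∧ (∀ i, ‖x i‖ < ‖monom m x‖ ^ γ) ∧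
    |Complex.arg (monom m x)| < θ / (d : ℝ)}

/-- The first integral `g_I(x) = x^I · (x^m)^λ` of the model vector field. -/
def gfun {n : ℕ} (m I : Fin n → ℕ) (lam : ℂ) (x : Fin n → ℂ) : ℂ :=
  monom I x * monom m x ^ lam

private lemma aux_finset_prod_diffWithinAt {E : Type*} [NormedAddCommGroup E]
    [NormedSpace ℂ E] {α : Type*} {u : Finset α} {f : α → E → ℂ} {s : Set E} {x : E}
    (h : ∀ j ∈ u, DifferentiableWithinAt ℂ (f j) s x) :
    DifferentiableWithinAt ℂ (fun y => ∏ j ∈ u, f j y) s x := by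
  classical
  induction u using Finset.cons_induction with
  | empty => simpa using differentiableWithinAt_const (1:ℂ)
  | cons a t ha ih =>
    simp only [Finset.prod_cons]
    exact (h a (Finset.mem_cons_self a t)).mul
      (ih fun j hj => h j (Finset.mem_cons.2 (Or.inr hj)))

theorem model_map_invertible
    {n : ℕ} [NeZero n]
    (M : Fin n → ℕ) (hM : M ≠ 0)
    (a : Fin n → ℂ) (ha : ∀ i, a i ≠ 0)
    (hnorm : ∑ i, a i * (M i : ℂ) = -1)
    (d : ℕ) (hd : d = Finset.univ.gcd M)
    (m : Fin n → ℕ) (hm : ∀ i, M i = d * m i)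
    (mbar : ℕ) (hmbar : mbar = (Finset.univ.filter (fun i => m i = 0)).card)
    (horder : ∀ i : Fin n, m i = 0 ↔ n - mbar ≤ (i : ℕ))
    (hre : ∀ i, (a i).re < 0)
    (γ : ℝ) (hγ : 0 < γ) (hγ' : ∀ i, (a i).re + γ / (d : ℝ) < 0)
    (𝓜mat Nmat : Matrix (Fin n) (Fin n) ℤ)
    (hnn : ∀ i j, 0 ≤ 𝓜mat i j)
    (hrow0 : ∀ j, 𝓜mat 0 j = (m j : ℤ))
    (hblock : ∀ i j : Fin n, (n - mbar ≤ (i : ℕ) ∨ n - mbar ≤ (j : ℕ)) →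
      𝓜mat i j = if i = j then 1 else 0)
    (hMN : 𝓜mat * Nmat = 1) (hNM : Nmat * 𝓜mat = 1)
    (φ : (Fin n → ℂ) → (Fin n → ℂ))
    (hφ : ∀ x, ∀ i : Fin n, φ x i = if i = 0 then (monom M x)⁻¹
      else gfun m (fun j => (𝓜mat i j).toNat) ((d : ℂ) * ∑ j, a j * (𝓜mat i j : ℂ)) x) :
    ∀ θ, 0 < θ → θ < Real.pi / 2 →
      ∃ ε₀ > 0, ∀ ε, 0 < ε → ε ≤ ε₀ →
        InjOn φ (U0set M m d γ ε θ) ∧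
        (∀ x ∈ U0set M m d γ ε θ, ∀ i : Fin n,
          x i = φ x 0 ^ a i *
            ∏ j ∈ Finset.univ.erase (0 : Fin n), φ x j ^ Nmat i j) ∧
        DifferentiableOn ℂ
          (fun y : Fin n → ℂ => fun i : Fin n =>
            y 0 ^ a i * ∏ j ∈ Finset.univ.erase (0 : Fin n), y j ^ Nmat i j)
          (φ '' U0set M m d γ ε θ) := by
  classical
  intro θ hθ0 hθπ
  refine ⟨1, one_pos, fun ε hε hε1 => ?_⟩
  set ν := n - mbar with hν
  -- basic consequences of the hypotheses
  have hd0 : d ≠ 0 := by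
    rintro rfl
    apply hM; funext i; simpa using hm i
  have hdR : (0:ℝ) < (d:ℝ) := by
    exact_mod_cast Nat.pos_of_ne_zero hd0
  have hν1 : 1 ≤ ν := by
    by_contra h
    have hmz : ∀ i : Fin n, m i = 0 := by
      intro i
      exact (horder i).mpr (by omega)
    apply hM; funext i; simp [hm i, hmz i]
  have hval0 : ((0 : Fin n) : ℕ) = 0 := rfl
  -- the block structure of `Nmat`
  have hNblk : ∀ i j : Fin n, (ν ≤ (i:ℕ) ∨ ν ≤ (j:ℕ)) → Nmat i j = if i = j then 1 else 0 := by
    intro i j hij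
    rcases hij with hi | hj
    · have h := congrArg (fun A => A i j) hMN
      simp only [Matrix.mul_apply, Matrix.one_apply] at h
      calc Nmat i j = ∑ k, (if i = k then (1:ℤ) else 0) * Nmat k j := by
            simp [ite_mul, Finset.sum_ite_eq]
        _ = ∑ k, 𝓜mat i k * Nmat k j := by
            refine Finset.sum_congr rfl fun k _ => ?_
            rw [hblock i k (Or.inl hi)]
        _ = if i = j then 1 else 0 := h
    · have h := congrArg (fun A => A i j) hNM
      simp only [Matrix.mul_apply, Matrix.one_apply] at h
      calc Nmat i j = ∑ k, Nmat i k * (if k = j then (1:ℤ) else 0) := by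
            simp [mul_ite, Finset.sum_ite_eq']
        _ = ∑ k, Nmat i k * 𝓜mat k j := by
            refine Finset.sum_congr rfl fun k _ => ?_
            rw [hblock k j (Or.inr hj)]
        _ = if i = j then 1 else 0 := h
  have hNMc : ∀ i k : Fin n, ∑ j, (Nmat i j : ℂ) * (𝓜mat j k : ℂ)
      = if i = k then 1 else 0 := by
    intro i k
    have h := congrArg (fun A => A i k) hNM
    simp only [Matrix.mul_apply, Matrix.one_apply] at h
    have h2 : ((∑ j, Nmat i j * 𝓜mat j k : ℤ) : ℂ) = ((if i = k then (1:ℤ) else 0 : ℤ) : ℂ) := by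
      rw [h]
    push_cast at h2
    convert h2 using 2
  -- the key inversion formula
  have key : ∀ x ∈ U0set M m d γ ε θ, ∀ i : Fin n,
      x i = φ x 0 ^ a i * ∏ j ∈ Finset.univ.erase (0 : Fin n), φ x j ^ Nmat i j := by
    intro x hx i
    obtain ⟨⟨hZ0, hZε, hZarg⟩, hxb, hzarg⟩ := hx
    set z := monom m x with hzdef
    have hZz : monom M x = z ^ d := by
      simp only [monom, hzdef, ← Finset.prod_pow]
      exact Finset.prod_congr rfl fun k _ => by rw [hm k, mul_comm, pow_mul]
    have hz0 : z ≠ 0 := fun h => hZ0 (by rw [hZz, h, zero_pow hd0])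
    have hxtop : ∀ k : Fin n, (k:ℕ) < ν → x k ≠ 0 := by
      intro k hk hk0
      apply hz0
      have hmk : m k ≠ 0 := fun h => absurd ((horder k).mp h) (by omega)
      exact Finset.prod_eq_zero (Finset.mem_univ k) (by rw [hk0, zero_pow hmk])
    set Lz := Complex.log z with hLz
    have hdim : (((d:ℕ):ℂ) * Lz).im = (d:ℝ) * z.arg := by
      simp [hLz, Complex.mul_im, Complex.log_im]
    have hdarg : |(d:ℝ) * z.arg| < θ := by
      rw [abs_mul, _root_.abs_of_nonneg (le_of_lt hdR)]
      calc (d:ℝ) * |z.arg| < (d:ℝ) * (θ / (d:ℝ)) := by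
            exact mul_lt_mul_of_pos_left hzarg hdR
        _ = θ := by field_simp
    have hπ : θ < Real.pi := lt_trans hθπ (by linarith [Real.pi_pos])
    have hlogZ : Complex.log (monom M x) = ((d:ℕ):ℂ) * Lz := by
      have h1 : monom M x = Complex.exp (((d:ℕ):ℂ) * Lz) := by
        rw [hZz, ← Complex.exp_log hz0, ← Complex.exp_nat_mul]
      rw [h1, Complex.log_exp]
      · rw [hdim]; have := abs_lt.mp hdarg; linarith
      · rw [hdim]; have := abs_lt.mp hdarg; linarith
    have hargZne : (monom M x).arg ≠ Real.pi := by
      intro h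
      rw [h, _root_.abs_of_nonneg (le_of_lt Real.pi_pos)] at hZarg
      linarith
    have hφ0 : φ x 0 = (monom M x)⁻¹ := by rw [hφ]; simp
    have hZinvpow : ∀ c : ℂ, (monom M x)⁻¹ ^ c = Complex.exp (-(((d:ℕ):ℂ) * Lz) * c) := by
      intro c
      rw [Complex.cpow_def_of_ne_zero (inv_ne_zero hZ0), Complex.log_inv _ hargZne, hlogZ]
    have hzc : ∀ c : ℂ, z ^ c = Complex.exp (Lz * c) :=
      fun c => Complex.cpow_def_of_ne_zero hz0 c
    by_cases hi : ν ≤ (i:ℕ)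
    · -- bottom block: the i-th row of 𝓜 is the i-th unit vector
      have hi0 : i ≠ 0 := by
        intro h
        rw [h] at hi
        rw [hval0] at hi
        omega
      have hφi : φ x i = x i * Complex.exp (Lz * (((d:ℕ):ℂ) * a i)) := by
        rw [hφ x i, if_neg hi0]
        unfold gfun
        have h1 : monom (fun j => (𝓜mat i j).toNat) x = x i := by
          unfold monom
          rw [Finset.prod_eq_single i]
          · show x i ^ (𝓜mat i i).toNat = x i
            rw [hblock i i (Or.inl hi)]; simp
          · intro k _ hk
            show x k ^ (𝓜mat i k).toNat = 1
            rw [hblock i k (Or.inl hi), if_neg (fun h => hk h.symm)]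
            simp
          · simp
        have h2 : (((d:ℕ):ℂ) * ∑ j, a j * (𝓜mat i j : ℂ)) = ((d:ℕ):ℂ) * a i := by
          congr 1
          rw [Finset.sum_eq_single i]
          · show a i * ((𝓜mat i i : ℤ) : ℂ) = a i
            rw [hblock i i (Or.inl hi)]; simp
          · intro k _ hk
            show a k * ((𝓜mat i k : ℤ) : ℂ) = 0
            rw [hblock i k (Or.inl hi), if_neg (fun h => hk h.symm)]
            simp
          · simp
        rw [h1, h2, hzc]
      have hprod : ∏ j ∈ Finset.univ.erase (0:Fin n), φ x j ^ Nmat i j = φ x i := by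
        rw [Finset.prod_eq_single_of_mem i (Finset.mem_erase.mpr ⟨hi0, Finset.mem_univ i⟩)]
        · rw [hNblk i i (Or.inl hi), if_pos rfl, zpow_one]
        · intro j _ hji
          rw [hNblk i j (Or.inl hi), if_neg (fun h => hji h.symm), zpow_zero]
      rw [hφ0, hZinvpow, hprod, hφi, mul_comm (x i), ← mul_assoc, ← Complex.exp_add]
      have h3 : -(((d:ℕ):ℂ) * Lz) * a i + Lz * (((d:ℕ):ℂ) * a i) = 0 := by ring
      rw [h3, Complex.exp_zero, one_mul]
    · -- top block
      push_neg at hi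
      set w : Fin n → ℂ := fun j => (∑ k, (𝓜mat j k : ℂ) * Complex.log (x k))
        + Lz * (((d:ℕ):ℂ) * ∑ k, a k * (𝓜mat j k : ℂ)) with hw
      have hmonom : ∀ j : Fin n, (j:ℕ) < ν →
          monom (fun k => (𝓜mat j k).toNat) x = Complex.exp (∑ k, (𝓜mat j k : ℂ) * Complex.log (x k)) := by
        intro j hj
        unfold monom
        rw [Complex.exp_sum]
        refine Finset.prod_congr rfl fun k _ => ?_
        by_cases hk : (k:ℕ) < ν
        · have hxk := hxtop k hk
          have hcast : (((𝓜mat j k).toNat : ℕ) : ℂ) = (𝓜mat j k : ℂ) := by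
            rw [← Int.cast_natCast, Int.toNat_of_nonneg (hnn j k)]
          show x k ^ (𝓜mat j k).toNat = Complex.exp ((𝓜mat j k : ℂ) * Complex.log (x k))
          rw [← hcast, Complex.exp_nat_mul, Complex.exp_log hxk]
        · have hk0 : 𝓜mat j k = 0 := by
            rw [hblock j k (Or.inr (le_of_not_gt hk)), if_neg]
            intro h; rw [h] at hj; omega
          show x k ^ (𝓜mat j k).toNat = Complex.exp ((𝓜mat j k : ℂ) * Complex.log (x k))
          simp [hk0]
      have hφtop : ∀ j : Fin n, j ≠ 0 → (j:ℕ) < ν → φ x j = Complex.exp (w j) := by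
        intro j hj0 hj
        rw [hφ x j, if_neg hj0]
        unfold gfun
        rw [hmonom j hj, hzc, ← Complex.exp_add]
      have hfac : ∀ j ∈ Finset.univ.erase (0:Fin n),
          φ x j ^ Nmat i j = Complex.exp ((Nmat i j : ℂ) * w j) := by
        intro j hj
        have hj0 : j ≠ 0 := (Finset.mem_erase.mp hj).1
        by_cases hjν : (j:ℕ) < ν
        · rw [hφtop j hj0 hjν, ← Complex.exp_int_mul]
        · have hN0 : Nmat i j = 0 := by
            rw [hNblk i j (Or.inr (le_of_not_gt hjν)), if_neg]
            intro h; rw [h] at hi; omega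
          rw [hN0]; simp
      rw [Finset.prod_congr rfl hfac, ← Complex.exp_sum, hφ0, hZinvpow, ← Complex.exp_add]
      set S : ℂ := ∑ k, (m k : ℂ) * Complex.log (x k) with hS
      have hw0 : w 0 = S - Lz := by
        rw [hw]
        have h1 : ∀ k : Fin n, ((𝓜mat 0 k : ℤ) : ℂ) = ((m k : ℕ) : ℂ) := by
          intro k; rw [hrow0 k]; push_cast; ring
        have h2 : ((d:ℕ):ℂ) * ∑ k, a k * ((𝓜mat 0 k : ℤ) : ℂ) = -1 := by
          rw [← hnorm, Finset.mul_sum]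
          refine Finset.sum_congr rfl fun k _ => ?_
          rw [h1 k, hm k]
          push_cast
          ring
        simp only []
        rw [h2]
        have h3 : ∑ k, ((𝓜mat 0 k : ℤ) : ℂ) * Complex.log (x k) = S := by
          rw [hS]
          exact Finset.sum_congr rfl fun k _ => by rw [h1 k]
        rw [h3]
        ring
      have hsumA : ∑ j, (Nmat i j : ℂ) * (∑ k, (𝓜mat j k : ℂ) * Complex.log (x k)) = Complex.log (x i) := by
        calc ∑ j, (Nmat i j : ℂ) * (∑ k, (𝓜mat j k : ℂ) * Complex.log (x k))
            = ∑ j, ∑ k, (Nmat i j : ℂ) * (𝓜mat j k : ℂ) * Complex.log (x k) := by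
              refine Finset.sum_congr rfl fun j _ => ?_
              rw [Finset.mul_sum]
              exact Finset.sum_congr rfl fun k _ => by ring
          _ = ∑ k, ∑ j, (Nmat i j : ℂ) * (𝓜mat j k : ℂ) * Complex.log (x k) := Finset.sum_comm
          _ = ∑ k, (∑ j, (Nmat i j : ℂ) * (𝓜mat j k : ℂ)) * Complex.log (x k) := by
              refine Finset.sum_congr rfl fun k _ => ?_
              rw [Finset.sum_mul]
          _ = Complex.log (x i) := by
              simp only [hNMc, ite_mul, one_mul, zero_mul]
              simp [Finset.sum_ite_eq]
      have hsumB : ∑ j, (Nmat i j : ℂ) * (Lz * (((d:ℕ):ℂ) * ∑ k, a k * (𝓜mat j k : ℂ)))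
          = Lz * ((d:ℕ):ℂ) * a i := by
        calc ∑ j, (Nmat i j : ℂ) * (Lz * (((d:ℕ):ℂ) * ∑ k, a k * (𝓜mat j k : ℂ)))
            = ∑ j, ∑ k, Lz * ((d:ℕ):ℂ) * (a k * ((Nmat i j : ℂ) * (𝓜mat j k : ℂ))) := by
              refine Finset.sum_congr rfl fun j _ => ?_
              rw [show (Nmat i j : ℂ) * (Lz * (((d:ℕ):ℂ) * ∑ k, a k * (𝓜mat j k : ℂ)))
                  = (Lz * ((d:ℕ):ℂ) * (Nmat i j : ℂ)) * ∑ k, a k * (𝓜mat j k : ℂ) by ring,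
                Finset.mul_sum]
              exact Finset.sum_congr rfl fun k _ => by ring
          _ = ∑ k, ∑ j, Lz * ((d:ℕ):ℂ) * (a k * ((Nmat i j : ℂ) * (𝓜mat j k : ℂ))) :=
              Finset.sum_comm
          _ = ∑ k, Lz * ((d:ℕ):ℂ) * (a k * (if i = k then (1:ℂ) else 0)) := by
              refine Finset.sum_congr rfl fun k _ => ?_
              rw [← Finset.mul_sum, ← Finset.mul_sum, hNMc]
          _ = Lz * ((d:ℕ):ℂ) * a i := by
              simp [mul_ite, Finset.sum_ite_eq]
      have hsum_full : ∑ j, (Nmat i j : ℂ) * w j = Complex.log (x i) + Lz * ((d:ℕ):ℂ) * a i := by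
        calc ∑ j, (Nmat i j : ℂ) * w j
            = ∑ j, ((Nmat i j : ℂ) * (∑ k, (𝓜mat j k : ℂ) * Complex.log (x k))
              + (Nmat i j : ℂ) * (Lz * (((d:ℕ):ℂ) * ∑ k, a k * (𝓜mat j k : ℂ)))) := by
              refine Finset.sum_congr rfl fun j _ => ?_
              rw [hw]; ring
          _ = _ := by
              rw [Finset.sum_add_distrib, hsumA, hsumB]
      have herase := Finset.add_sum_erase Finset.univ
        (fun j => (Nmat i j : ℂ) * w j) (Finset.mem_univ (0 : Fin n))
      have hsum_erase : ∑ j ∈ Finset.univ.erase (0:Fin n), (Nmat i j : ℂ) * w j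
          = Complex.log (x i) + Lz * ((d:ℕ):ℂ) * a i - (Nmat i 0 : ℂ) * (S - Lz) := by
        have h5 : (Nmat i 0 : ℂ) * w 0 + ∑ j ∈ Finset.univ.erase (0:Fin n), (Nmat i j : ℂ) * w j
            = ∑ j, (Nmat i j : ℂ) * w j := herase
        rw [hw0, hsum_full] at h5
        linear_combination h5
      rw [hsum_erase]
      have hexpS : Complex.exp S = z := by
        rw [hS, Complex.exp_sum, hzdef]
        unfold monom
        refine Finset.prod_congr rfl fun k _ => ?_
        by_cases hmk : m k = 0
        · simp [hmk]
        · have hk : (k:ℕ) < ν := by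
            have := (horder k)
            omega
          show Complex.exp ((m k : ℂ) * Complex.log (x k)) = x k ^ m k
          rw [Complex.exp_nat_mul, Complex.exp_log (hxtop k hk)]
      have hzero : Complex.exp (Lz - S) = 1 := by
        rw [Complex.exp_sub, hexpS, hLz, Complex.exp_log hz0, div_self hz0]
      have hxi : Complex.exp (Complex.log (x i)) = x i := Complex.exp_log (hxtop i hi)
      calc x i = Complex.exp (Complex.log (x i)) * (Complex.exp (Lz - S)) ^ (Nmat i 0) := by
            rw [hzero, hxi, one_zpow, mul_one]
        _ = Complex.exp (Complex.log (x i)) * Complex.exp ((Nmat i 0 : ℂ) * (Lz - S)) := by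
            rw [Complex.exp_int_mul]
        _ = Complex.exp (Complex.log (x i) + (Nmat i 0 : ℂ) * (Lz - S)) := by
            rw [Complex.exp_add]
        _ = _ := by
            congr 1
            ring
  refine ⟨?_, key, ?_⟩
  · intro x hx y hy hxy
    funext i
    rw [key x hx i, key y hy i, hxy]
  · rw [differentiableOn_pi]
    intro i
    rintro y ⟨x, hx, rfl⟩
    obtain ⟨⟨hZ0, hZε, hZarg⟩, hxb, hzarg⟩ := hx
    set z := monom m x with hzdef
    have hZz : monom M x = z ^ d := by
      simp only [monom, hzdef, ← Finset.prod_pow]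
      exact Finset.prod_congr rfl fun k _ => by rw [hm k, mul_comm, pow_mul]
    have hz0 : z ≠ 0 := fun h => hZ0 (by rw [hZz, h, zero_pow hd0])
    have hxtop : ∀ k : Fin n, (k:ℕ) < ν → x k ≠ 0 := by
      intro k hk hk0
      apply hz0
      have hmk : m k ≠ 0 := fun h => absurd ((horder k).mp h) (by omega)
      exact Finset.prod_eq_zero (Finset.mem_univ k) (by rw [hk0, zero_pow hmk])
    have hπ2 : θ < Real.pi / 2 := hθπ
    have hargZne : (monom M x).arg ≠ Real.pi := by
      intro h
      rw [h, _root_.abs_of_nonneg (le_of_lt Real.pi_pos)] at hZarg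
      have := Real.pi_pos
      linarith
    have hφ0 : φ x 0 = (monom M x)⁻¹ := by rw [hφ]; simp
    have hslit : φ x 0 ∈ Complex.slitPlane := by
      rw [Complex.mem_slitPlane_iff_arg, hφ0]
      refine ⟨?_, inv_ne_zero hZ0⟩
      rw [Complex.arg_inv, if_neg hargZne]
      intro h
      have h2 := abs_lt.mp hZarg
      have := Real.pi_pos
      rw [show (monom M x).arg = -Real.pi by linarith] at h2
      rw [_root_.abs_of_nonpos (by linarith)] at hZarg
      linarith
    apply DifferentiableWithinAt.mul
    · exact DifferentiableWithinAt.cpow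
        ((differentiableAt_apply (𝕜 := ℂ) (0 : Fin n) (φ x)).differentiableWithinAt)
        (differentiableWithinAt_const _) hslit
    · apply aux_finset_prod_diffWithinAt
      intro j hj
      have hj0 : j ≠ 0 := (Finset.mem_erase.mp hj).1
      have hne : φ x j ≠ 0 ∨ 0 ≤ Nmat i j := by
        by_cases hjν : (j:ℕ) < ν
        · left
          rw [hφ x j, if_neg hj0]
          unfold gfun
          apply mul_ne_zero
          · unfold monom
            rw [Finset.prod_ne_zero_iff]
            intro k _
            by_cases hk : (k:ℕ) < ν
            · exact pow_ne_zero _ (hxtop k hk)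
            · have hk0 : 𝓜mat j k = 0 := by
                rw [hblock j k (Or.inr (le_of_not_gt hk)), if_neg]
                intro h; rw [h] at hjν; omega
              simp [hk0]
          · rw [Complex.cpow_def_of_ne_zero hz0]
            exact Complex.exp_ne_zero _
        · right
          rw [hNblk i j (Or.inr (le_of_not_gt hjν))]
          split <;> norm_num
      have hdj : DifferentiableAt ℂ (fun y : Fin n → ℂ => y j ^ Nmat i j) (φ x) := by
        have h1 : DifferentiableAt ℂ (fun w : ℂ => w ^ Nmat i j) (φ x j) :=
          differentiableAt_zpow.mpr hne
        exact h1.comp (φ x) (differentiableAt_apply (𝕜 := ℂ) j (φ x))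
      exact hdj.differentiableWithinAt
end
end

section
/- Lemma (invariance of V and derivative estimate). If ε, θ and r are small enough, then F̃(V(ε,θ,r)) ⊆ V(ε,θ,r), and there exists a constant K' > 0 such that |∂h̃/∂z (z,w)| < K'·|z|^{−1−γ/d} for every (z,w) ∈ V(ε,θ,r). -/
/-!
Invariance of `V` and derivative estimate: if `ε, θ, r` are small enough, then
`F̃(V(ε,θ,r)) ⊆ V(ε,θ,r)` and there is `K' > 0` with
`|∂h̃/∂z(z,w)| < K'·|z|^{-1-γ/d}` on `V(ε,θ,r)`, where
`F̃(z,w) = (z + 1 + h̃(z,w), w)` is the conjugated map, which is holomorphic and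
satisfies `|h̃(z,w)| < K·|z|^{-γ/d}` on the (larger) fixed domain `V(ε₁,θ₁,r₁)` on which
everything holds.
-/


noncomputable section
open Complex Filter Topology Set Function

lemma tan_abs_eq {a : ℝ} (h : |a| < Real.pi / 2) : Real.tan |a| = |Real.tan a| := by
  rcases le_or_gt 0 a with ha | ha
  · rw [_root_.abs_of_nonneg ha] at h ⊢
    rw [_root_.abs_of_nonneg (Real.tan_nonneg_of_nonneg_of_le_pi_div_two ha h.le)]
  · rw [abs_of_neg ha] at h ⊢
    rw [Real.tan_neg, _root_.abs_of_nonpos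
      (Real.tan_nonpos_of_nonpos_of_neg_pi_div_two_le ha.le (by linarith))]

lemma abs_arg_lt_iff_tan {z : ℂ} {θ : ℝ} (hre : 0 < z.re) (hθ : 0 < θ)
    (hθ' : θ < Real.pi / 2) : |Complex.arg z| < θ ↔ |z.im| < Real.tan θ * z.re := by
  have hπ := Real.pi_pos
  have h2 : |Complex.arg z| < Real.pi / 2 :=
    Complex.abs_arg_lt_pi_div_two_iff.mpr (Or.inl hre)
  have hmem1 : |Complex.arg z| ∈ Set.Ioo (-(Real.pi / 2)) (Real.pi / 2) :=
    ⟨lt_of_lt_of_le (by linarith) (abs_nonneg _), h2⟩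
  have hmem2 : θ ∈ Set.Ioo (-(Real.pi / 2)) (Real.pi / 2) := ⟨by linarith, hθ'⟩
  have key : |Complex.arg z| < θ ↔ Real.tan |Complex.arg z| < Real.tan θ :=
    (Real.strictMonoOn_tan.lt_iff_lt hmem1 hmem2).symm
  rw [key, tan_abs_eq h2, Complex.tan_arg, abs_div, abs_of_pos hre, div_lt_iff₀ hre]

/-- The domain `V(ε,θ,r)` of the approximate Fatou coordinates. -/
def Vset {n : ℕ} [NeZero n] (N : Matrix (Fin n) (Fin n) ℤ) (a : Fin n → ℂ)
    (γ : ℝ) (d : ℕ) (ε θ r : ℝ) : Set (Fin n → ℂ) :=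
  {y | ε⁻¹ < ‖y 0‖ ∧ |Complex.arg (y 0)| < θ ∧
    ∀ i, ‖∏ j ∈ Finset.univ.erase (0 : Fin n), y j ^ (N i j).toNat‖ <
      r * ‖y 0‖ ^ (-(γ / (d : ℝ)) - (a i).re) *
        ‖∏ j ∈ Finset.univ.erase (0 : Fin n), y j ^ (-(N i j)).toNat‖}

lemma update_prod_eq {n : ℕ} [NeZero n] (y : Fin n → ℂ) (v : ℂ) (g : Fin n → ℕ) :
    (∏ j ∈ Finset.univ.erase (0 : Fin n), Function.update y 0 v j ^ g j)
      = ∏ j ∈ Finset.univ.erase (0 : Fin n), y j ^ g j := by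
  refine Finset.prod_congr rfl fun j hj => ?_
  rw [Function.update_of_ne (Finset.ne_of_mem_erase hj)]

/-- Updating the first coordinate stays in a `Vset` provided the new value satisfies the
three defining conditions (with the product condition factored through the old one). -/
lemma mem_Vset_update {n : ℕ} [NeZero n] {N : Matrix (Fin n) (Fin n) ℤ} {a : Fin n → ℂ}
    {γ : ℝ} {d : ℕ} {ε θ r : ℝ} {y : Fin n → ℂ}
    (hy : y ∈ Vset N a γ d ε θ r) (v : ℂ) (ε' θ' r' : ℝ)
    (hv1 : ε'⁻¹ < ‖v‖) (hv2 : |Complex.arg v| < θ')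
    (hv3 : ∀ i, r * ‖y 0‖ ^ (-(γ / (d : ℝ)) - (a i).re)
        ≤ r' * ‖v‖ ^ (-(γ / (d : ℝ)) - (a i).re)) :
    Function.update y 0 v ∈ Vset N a γ d ε' θ' r' := by
  obtain ⟨h1, h2, h3⟩ := hy
  refine ⟨?_, ?_, fun i => ?_⟩
  · rwa [Function.update_self]
  · rwa [Function.update_self]
  · rw [Function.update_self, update_prod_eq, update_prod_eq]
    exact lt_of_lt_of_le (h3 i)
      (mul_le_mul_of_nonneg_right (hv3 i) (norm_nonneg _))

set_option maxHeartbeats 2000000 in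

private lemma arith1 {p q A B : ℝ} (hp : 0 < p) (hq1 : -p < q) (hq2 : q < p)
    (hA1 : -(1/2) ≤ A) (hB1 : -(1/2) ≤ B) (hB2 : B ≤ 1/2) :
    p * p + q * q < (p + 1 + A) * (p + 1 + A) + (q + B) * (q + B) := by
  have f1 : 0 ≤ (p - q) * (1/2 - B) := mul_nonneg (by linarith) (by linarith)
  have f2 : 0 ≤ (p + q) * (1/2 + B) := mul_nonneg (by linarith) (by linarith)
  have f3 : 0 ≤ p * (2 * (1 + A) - 1) := mul_nonneg hp.le (by linarith)
  have f4 : (1/2 : ℝ) * (1/2) ≤ (1 + A) * (1 + A) :=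
    mul_le_mul (by linarith) (by linarith) (by norm_num) (by linarith)
  have f5 : 0 ≤ B * B := mul_self_nonneg B
  nlinarith [f1, f2, f3, f4, f5]

private lemma arith2 {t p A iv iq iB : ℝ} (ht : 0 < t) (hiv : iv ≤ iq + iB)
    (hiq : iq < t * p) (hiB : iB < t / 2) (hA : -(1/2) ≤ A) :
    iv < t * (p + 1 + A) := by
  have f : 0 ≤ t * (1/2 + A) := mul_nonneg ht.le (by linarith)
  nlinarith [f]

private lemma arith3 {S T c p Y iq : ℝ} (hS : 0 < S) (hc : 0 < c) (hp : 0 < p)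
    (hY : 0 ≤ Y) (hiq : iq < T * p) (hY2 : Y < 2 * p) (hceq : 2 * c * (1 + S) = S - T) :
    iq + c * Y < S * (p - c * Y) := by
  have e1 : c * Y < c * (2 * p) := mul_lt_mul_of_pos_left hY2 hc
  have e3 : S * (c * Y) ≤ S * (c * (2 * p)) := mul_le_mul_of_nonneg_left e1.le hS.le
  have e4 : T * p + 2 * c * p + 2 * c * S * p = S * p := by linear_combination p * hceq
  nlinarith [e1, e3, e4]

private lemma arith4 {c p Y zre : ℝ} (hc : 0 < c) (hc2 : c < 1/2) (hp : 0 < p)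
    (hY2 : Y < 2 * p) (hz : p - c * Y ≤ zre) : 0 < zre := by
  have f1 : 0 < c * (2 * p - Y) := mul_pos hc (by linarith)
  have f2 : 0 ≤ (1/2 - c) * (2 * p) := mul_nonneg (by linarith) (by linarith)
  nlinarith [f1, f2]

set_option maxHeartbeats 1000000 in
theorem V_invariance_and_derivative_estimate
    {n : ℕ} [NeZero n]
    (Nmat : Matrix (Fin n) (Fin n) ℤ) (a : Fin n → ℂ) (γ : ℝ) (d : ℕ)
    (hd : 1 ≤ d) (hγ : 0 < γ)
    (ha : ∀ i, a i ≠ 0) (hre : ∀ i, (a i).re < 0)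
    (hγ' : ∀ i, (a i).re + γ / (d : ℝ) < 0)
    (K : ℝ) (hK : 0 < K)
    (θ₁ ε₁ r₁ : ℝ) (hθ₁ : 0 < θ₁) (hθ₁' : θ₁ < Real.pi / 2) (hε₁ : 0 < ε₁) (hr₁ : 0 < r₁)
    (h : (Fin n → ℂ) → ℂ)
    (hdiff : DifferentiableOn ℂ h (Vset Nmat a γ d ε₁ θ₁ r₁))
    (hbound : ∀ y ∈ Vset Nmat a γ d ε₁ θ₁ r₁,
      ‖h y‖ < K * ‖y 0‖ ^ (-(γ / (d : ℝ)))) :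
    ∀ θ, 0 < θ → θ ≤ θ₁ / 2 →
      ∃ ε₀, 0 < ε₀ ∧ ε₀ ≤ ε₁ ∧ ∃ K' > 0, ∀ ε, 0 < ε → ε ≤ ε₀ →
        ∃ r₀, 0 < r₀ ∧ r₀ ≤ r₁ ∧ ∀ r, 0 < r → r ≤ r₀ →
          (∀ y ∈ Vset Nmat a γ d ε θ r,
            Function.update y 0 (y 0 + 1 + h y) ∈ Vset Nmat a γ d ε θ r) ∧
          (∀ y ∈ Vset Nmat a γ d ε θ r,
            ‖deriv (fun z => h (Function.update y 0 z)) (y 0)‖ <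
              K' * ‖y 0‖ ^ (-1 - γ / (d : ℝ))) := by
  intro θ hθ hθle
  have hπ := Real.pi_pos
  have hdpos : (0:ℝ) < (d : ℝ) := by exact_mod_cast Nat.lt_of_lt_of_le Nat.zero_lt_one hd
  have hγd : 0 < γ / (d : ℝ) := div_pos hγ hdpos
  have hθ₁4 : θ₁ / 2 < Real.pi / 4 := by linarith
  have hθlt : θ < Real.pi / 2 := by linarith
  set S := Real.tan θ₁ with hSdef
  set T := Real.tan (θ₁ / 2) with hTdef
  set t := Real.tan θ with htdef
  have hSpos : 0 < S := Real.tan_pos_of_pos_of_lt_pi_div_two hθ₁ hθ₁'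
  have htpos : 0 < t := Real.tan_pos_of_pos_of_lt_pi_div_two hθ hθlt
  have hTpos : 0 < T := Real.tan_pos_of_pos_of_lt_pi_div_two (by linarith) (by linarith)
  have hTS : T < S :=
    Real.tan_lt_tan_of_nonneg_of_lt_pi_div_two (by linarith) hθ₁' (by linarith)
  have hT1 : T < 1 := by
    have := Real.tan_lt_tan_of_nonneg_of_lt_pi_div_two (by linarith) (by linarith) hθ₁4
    rwa [Real.tan_pi_div_four] at this
  have htT : t ≤ T :=
    Real.strictMonoOn_tan.monotoneOn ⟨by linarith, by linarith⟩ ⟨by linarith, by linarith⟩ hθle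
  set c := (S - T) / (2 * (1 + S)) with hcdef
  have hcpos : 0 < c := div_pos (by linarith) (by linarith)
  have hchalf : c < 1 / 2 := by
    rw [hcdef, div_lt_iff₀ (by linarith)]; linarith
  have hc_eq : 2 * c * (1 + S) = S - T := by
    rw [hcdef]; field_simp
  clear_value S T t c
  set δ := min (1/2 : ℝ) (t/2) with hδdef
  have hδpos : 0 < δ := lt_min (by norm_num) (by linarith)
  have hδhalf : δ ≤ 1/2 := min_le_left _ _
  have hδt : δ ≤ t/2 := min_le_right _ _
  set ε₀ := min (ε₁ / 2) ((δ / K) ^ ((d : ℝ) / γ)) with hε₀def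
  have hε₀pos : 0 < ε₀ :=
    lt_min (by linarith) (Real.rpow_pos_of_pos (div_pos hδpos hK) _)
  have hε₀half : ε₀ ≤ ε₁ / 2 := min_le_left _ _
  have hε₀K : ε₀ ≤ (δ / K) ^ ((d : ℝ) / γ) := min_le_right _ _
  have hε₀le : ε₀ ≤ ε₁ := le_trans hε₀half (by linarith)
  clear_value δ ε₀
  set e : Fin n → ℝ := fun i => -(γ / (d : ℝ)) - (a i).re with hedef
  have hepos : ∀ i, 0 < e i := fun i => by have := hγ' i; simp only [hedef]; linarith
  haveI : Nonempty (Fin n) := ⟨0⟩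
  set E := Finset.univ.sup' Finset.univ_nonempty e with hEdef
  have hEe : ∀ i, e i ≤ E := fun i => Finset.le_sup' e (Finset.mem_univ i)
  have hEpos : 0 < E := lt_of_lt_of_le (hepos 0) (hEe 0)
  clear_value E
  set B := (2:ℝ) ^ ((1:ℝ) + γ / (d : ℝ)) * K / c with hBdef
  have hBpos : 0 < B := div_pos (mul_pos (Real.rpow_pos_of_pos two_pos _) hK) hcpos
  refine ⟨ε₀, hε₀pos, hε₀le, 2 * B, by linarith, ?_⟩
  intro ε hε hεle
  have hr₀pos : 0 < r₁ * (2:ℝ) ^ (-E) := mul_pos hr₁ (Real.rpow_pos_of_pos two_pos _)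
  have hr₀le : r₁ * (2:ℝ) ^ (-E) ≤ r₁ :=
    mul_le_of_le_one_right hr₁.le (Real.rpow_le_one_of_one_le_of_nonpos one_le_two (by linarith))
  refine ⟨r₁ * (2:ℝ) ^ (-E), hr₀pos, hr₀le, ?_⟩
  intro r hr hrle
  have hrr₁ : r ≤ r₁ := hrle.trans hr₀le
  -- y ∈ V(ε,θ,r) implies y ∈ V(ε₁,θ₁,r₁)
  have hVsub : Vset Nmat a γ d ε θ r ⊆ Vset Nmat a γ d ε₁ θ₁ r₁ := by
    intro y hy
    obtain ⟨h1, h2, h3⟩ := hy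
    refine ⟨lt_of_le_of_lt ?_ h1, lt_of_lt_of_le h2 (by linarith), fun i => ?_⟩
    · exact inv_anti₀ hε (hεle.trans hε₀le)
    · refine lt_of_lt_of_le (h3 i) ?_
      refine mul_le_mul_of_nonneg_right (mul_le_mul_of_nonneg_right hrr₁ ?_) ?_
      · exact Real.rpow_nonneg (norm_nonneg _) _
      · exact norm_nonneg _
  -- basic facts for y ∈ V(ε,θ,r)
  have hfacts : ∀ y ∈ Vset Nmat a γ d ε θ r,
      0 < ‖y 0‖ ∧ 0 < (y 0).re ∧ |(y 0).im| < t * (y 0).re ∧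
      ‖y 0‖ < 2 * (y 0).re ∧ ‖h y‖ < δ := by
    intro y hy
    obtain ⟨h1, h2, h3⟩ := id hy
    have hy0pos : 0 < ‖y 0‖ := lt_trans (inv_pos.mpr hε) h1
    have hy0ne : y 0 ≠ 0 := by
      intro h0; rw [h0] at hy0pos; simp at hy0pos
    have hrepos : 0 < (y 0).re := by
      have h2' : |Complex.arg (y 0)| < Real.pi / 2 := lt_trans h2 hθlt
      rcases Complex.abs_arg_lt_pi_div_two_iff.mp h2' with hh | hh
      · exact hh
      · exact absurd hh hy0ne
    have him : |(y 0).im| < t * (y 0).re := by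
      rw [htdef]; exact (abs_arg_lt_iff_tan hrepos hθ hθlt).mp h2
    have him1 : |(y 0).im| < (y 0).re := by
      have ht1 : t ≤ 1 := htT.trans hT1.le
      have := mul_le_mul_of_nonneg_right ht1 hrepos.le
      rw [one_mul] at this
      linarith
    have habs2 : ‖y 0‖ < 2 * (y 0).re := by
      have := Complex.norm_le_abs_re_add_abs_im (y 0)
      rw [_root_.abs_of_pos hrepos] at this
      linarith
    refine ⟨hy0pos, hrepos, him, habs2, ?_⟩
    -- |h y| < δ
    have hb := hbound y (hVsub hy)
    have hεexp : ‖y 0‖ ^ (-(γ / (d:ℝ))) < ε ^ (γ / (d:ℝ)) := by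
      have h1' : (ε⁻¹) ^ (γ / (d:ℝ)) < ‖y 0‖ ^ (γ / (d:ℝ)) :=
        Real.rpow_lt_rpow (inv_pos.mpr hε).le h1 hγd
      rw [Real.inv_rpow hε.le] at h1'
      rw [Real.rpow_neg (norm_nonneg _)]
      exact inv_lt_of_inv_lt₀ (Real.rpow_pos_of_pos hε _) h1'
    have hεε₀ : ε ^ (γ / (d:ℝ)) ≤ ε₀ ^ (γ / (d:ℝ)) :=
      Real.rpow_le_rpow hε.le hεle hγd.le
    have hε₀δ : ε₀ ^ (γ / (d:ℝ)) ≤ δ / K := by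
      calc ε₀ ^ (γ / (d:ℝ)) ≤ ((δ / K) ^ ((d:ℝ) / γ)) ^ (γ / (d:ℝ)) :=
            Real.rpow_le_rpow hε₀pos.le hε₀K hγd.le
        _ = δ / K := by
            rw [← Real.rpow_mul (div_pos hδpos hK).le,
              show (d:ℝ) / γ * (γ / (d:ℝ)) = 1 by field_simp, Real.rpow_one]
    calc ‖h y‖ < K * ‖y 0‖ ^ (-(γ / (d:ℝ))) := hb
      _ < K * (ε ^ (γ / (d:ℝ))) := by exact mul_lt_mul_of_pos_left hεexp hK
      _ ≤ K * (δ / K) := by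
          refine mul_le_mul_of_nonneg_left (hεε₀.trans hε₀δ) hK.le
      _ = δ := by field_simp
  -- the closed disk of radius c|y₀| around y₀ maps into V(ε₁,θ₁,r₁)
  have hdisk : ∀ y ∈ Vset Nmat a γ d ε θ r,
      ∀ z ∈ Metric.closedBall (y 0) (c * ‖y 0‖),
        Function.update y 0 z ∈ Vset Nmat a γ d ε₁ θ₁ r₁ := by
    intro y hy z hz
    obtain ⟨hy0pos, hrepos, him, habs2, -⟩ := hfacts y hy
    obtain ⟨h1, h2, h3⟩ := id hy
    set Y := ‖y 0‖ with hYdef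
    have hzd : ‖z - y 0‖ ≤ c * Y := by
      rw [Metric.mem_closedBall, Complex.dist_eq] at hz; exact hz
    have habs_z_lb : Y / 2 ≤ ‖z‖ := by
      have h' : ‖y 0‖ - ‖z‖ ≤ ‖y 0 - z‖ := by
        have := norm_sub_norm_le (y 0) z
        simpa using this
      rw [norm_sub_rev] at hzd
      have hcY : c * Y ≤ 1 / 2 * Y :=
        mul_le_mul_of_nonneg_right hchalf.le (norm_nonneg _)
      linarith
    refine mem_Vset_update hy z ε₁ θ₁ r₁ ?_ ?_ ?_
    · -- ε₁⁻¹ < |z|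
      have hεhalf : ε ≤ ε₁ / 2 := hεle.trans hε₀half
      have hinv : 1 / ε₁ ≤ 1 / ε / 2 := by
        rw [div_div, div_le_div_iff₀ hε₁ (by positivity)]
        linarith
      have h1' : 1 / ε < Y := by rwa [one_div]
      calc ε₁⁻¹ = 1 / ε₁ := (one_div _).symm
        _ ≤ 1 / ε / 2 := hinv
        _ < Y / 2 := by linarith
        _ ≤ ‖z‖ := habs_z_lb
    · -- |arg z| < θ₁
      have hzre : (y 0).re - c * Y ≤ z.re := by
        have h' : |(z - y 0).re| ≤ c * Y := le_trans (Complex.abs_re_le_norm _) hzd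
        rw [Complex.sub_re] at h'
        have := abs_le.mp h'
        linarith [this.1]
      have hzim : |z.im| ≤ |(y 0).im| + c * Y := by
        have h' : |(z - y 0).im| ≤ c * Y := le_trans (Complex.abs_im_le_norm _) hzd
        rw [Complex.sub_im] at h'
        have h'' := abs_le.mp h'
        rw [abs_le]
        constructor
        · linarith [neg_abs_le (y 0).im, h''.1]
        · linarith [le_abs_self (y 0).im, h''.2]
      have himT : |(y 0).im| < T * (y 0).re :=
        lt_of_lt_of_le him (mul_le_mul_of_nonneg_right htT hrepos.le)
      have hzre_pos : 0 < z.re := arith4 hcpos hchalf hrepos habs2 hzre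
      refine (abs_arg_lt_iff_tan hzre_pos hθ₁ hθ₁').mpr ?_
      rw [← hSdef]
      have e2 : S * ((y 0).re - c * Y) ≤ S * z.re :=
        mul_le_mul_of_nonneg_left hzre hSpos.le
      calc |z.im| ≤ |(y 0).im| + c * Y := hzim
        _ < S * ((y 0).re - c * Y) :=
            arith3 hSpos hcpos hrepos (norm_nonneg _) himT habs2 hc_eq
        _ ≤ S * z.re := e2
    · -- product conditions
      intro i
      show r * Y ^ (e i) ≤ r₁ * ‖z‖ ^ (e i)
      have step1 : r * Y ^ (e i) ≤ r₁ * (2:ℝ) ^ (-E) * Y ^ (e i) :=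
        mul_le_mul_of_nonneg_right hrle (Real.rpow_nonneg (norm_nonneg _) _)
      have step2 : r₁ * (2:ℝ) ^ (-E) * Y ^ (e i) ≤ r₁ * (2:ℝ) ^ (-(e i)) * Y ^ (e i) := by
        refine mul_le_mul_of_nonneg_right (mul_le_mul_of_nonneg_left ?_ hr₁.le)
          (Real.rpow_nonneg (norm_nonneg _) _)
        exact Real.rpow_le_rpow_of_exponent_le one_le_two (neg_le_neg (hEe i))
      have step3 : r₁ * (2:ℝ) ^ (-(e i)) * Y ^ (e i) = r₁ * (Y / 2) ^ (e i) := by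
        rw [Real.div_rpow (norm_nonneg _) (by norm_num : (0:ℝ) ≤ 2),
          Real.rpow_neg (by norm_num : (0:ℝ) ≤ 2)]
        field_simp
        rfl
      have step4 : r₁ * (Y / 2) ^ (e i) ≤ r₁ * ‖z‖ ^ (e i) :=
        mul_le_mul_of_nonneg_left
          (Real.rpow_le_rpow (by positivity) habs_z_lb (hepos i).le) hr₁.le
      calc r * Y ^ (e i) ≤ r₁ * (2:ℝ) ^ (-E) * Y ^ (e i) := step1
        _ ≤ r₁ * (2:ℝ) ^ (-(e i)) * Y ^ (e i) := step2
        _ = r₁ * (Y / 2) ^ (e i) := step3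
        _ ≤ r₁ * ‖z‖ ^ (e i) := step4
  constructor
  · -- invariance
    intro y hy
    obtain ⟨hy0pos, hrepos, him, habs2, hhy⟩ := hfacts y hy
    obtain ⟨h1, h2, h3⟩ := hy
    set p := (y 0).re with hpdef
    set q := (y 0).im with hqdef
    have hA : |(h y).re| < δ := lt_of_le_of_lt (Complex.abs_re_le_norm _) hhy
    have hB2 : |(h y).im| < δ := lt_of_le_of_lt (Complex.abs_im_le_norm _) hhy
    have hA' := abs_lt.mp hA
    have hB' := abs_lt.mp hB2
    have him1 : |q| < p := by
      have ht1 : t ≤ 1 := htT.trans hT1.le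
      have := mul_le_mul_of_nonneg_right ht1 hrepos.le
      rw [one_mul] at this
      simp only [hqdef, hpdef]
      linarith
    have hq' := abs_lt.mp him1
    have hvgt : ‖y 0‖ < ‖y 0 + 1 + h y‖ := by
      rw [Complex.norm_def, Complex.norm_def]
      apply Real.sqrt_lt_sqrt (Complex.normSq_nonneg _)
      simp only [Complex.normSq_apply, Complex.add_re, Complex.add_im, Complex.one_re,
        Complex.one_im, add_zero]
      exact arith1 hrepos hq'.1 hq'.2 (by linarith) (by linarith) (by linarith)
    have hvre : 0 < (y 0 + 1 + h y).re := by
      simp only [Complex.add_re, Complex.one_re]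
      linarith
    refine mem_Vset_update ⟨h1, h2, h3⟩ _ ε θ r (lt_trans h1 hvgt) ?_ ?_
    · refine (abs_arg_lt_iff_tan hvre hθ hθlt).mpr ?_
      rw [← htdef]
      have himv : |(y 0 + 1 + h y).im| ≤ |q| + |(h y).im| := by
        simp only [Complex.add_im, Complex.one_im, add_zero]
        exact abs_add_le _ _
      simp only [Complex.add_re, Complex.one_re]
      exact arith2 htpos himv him (by linarith) (by linarith)
    · intro i
      exact mul_le_mul_of_nonneg_left
        (Real.rpow_le_rpow (norm_nonneg _) hvgt.le (hepos i).le) hr.le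
  · -- derivative estimate
    intro y hy
    obtain ⟨hy0pos, hrepos, him, habs2, hhy⟩ := hfacts y hy
    set Y := ‖y 0‖ with hYdef
    have hρpos : 0 < c * Y / 2 := by positivity
    have hsub : Metric.closedBall (y 0) (c * Y / 2) ⊆ Metric.ball (y 0) (c * Y) :=
      Metric.closedBall_subset_ball (by linarith)
    have hφ : Differentiable ℂ (fun z : ℂ => Function.update y 0 z) := by
      refine differentiable_pi.mpr fun i => ?_
      rcases eq_or_ne i 0 with rfl | hne
      · simp only [Function.update_self]
        exact differentiable_id
      · simp only [Function.update_of_ne hne]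
        exact differentiable_const _
    have hgd : DifferentiableOn ℂ (fun z => h (Function.update y 0 z))
        (Metric.ball (y 0) (c * Y)) := by
      exact hdiff.comp hφ.differentiableOn
        (fun z hz => hdisk y hy z (Metric.ball_subset_closedBall hz))
    have hM : ∀ x ∈ Metric.sphere (y 0) (c * Y / 2),
        ‖h (Function.update y 0 x)‖ ≤ K * (Y / 2) ^ (-(γ / (d:ℝ))) := by
      intro x hx
      have hx' : x ∈ Metric.closedBall (y 0) (c * Y) :=
        (Metric.closedBall_subset_closedBall (by linarith)) (Metric.sphere_subset_closedBall hx)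
      have hmem := hdisk y hy x hx'
      have hb := hbound _ hmem
      rw [Function.update_self] at hb
      have hxabs : Y / 2 ≤ ‖x‖ := by
        have hd' : ‖x - y 0‖ = c * Y / 2 := by
          rw [Metric.mem_sphere, Complex.dist_eq] at hx; exact hx
        have h' : ‖y 0‖ - ‖x‖ ≤ ‖y 0 - x‖ := by
          have := norm_sub_norm_le (y 0) x
          simpa using this
        rw [norm_sub_rev] at hd'
        have hcY : c * Y ≤ 1 / 2 * Y :=
          mul_le_mul_of_nonneg_right hchalf.le (norm_nonneg _)
        linarith
      refine hb.le.trans (mul_le_mul_of_nonneg_left ?_ hK.le)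
      exact Real.rpow_le_rpow_of_nonpos (by positivity) hxabs (by linarith)
    have hcd := Complex.norm_cderiv_le hρpos hM
    have heq : Complex.cderiv (c * Y / 2) (fun z => h (Function.update y 0 z)) (y 0)
        = deriv (fun z => h (Function.update y 0 z)) (y 0) :=
      Complex.cderiv_eq_deriv Metric.isOpen_ball hgd hρpos hsub
    rw [heq] at hcd
    rw [show ‖deriv (fun z => h (Function.update y 0 z)) (y 0)‖
        = ‖deriv (fun z => h (Function.update y 0 z)) (y 0)‖ from rfl]
    have harith : K * (Y / 2) ^ (-(γ / (d:ℝ))) / (c * Y / 2) = B * Y ^ (-1 - γ / (d:ℝ)) := by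
      have hYne : Y ≠ 0 := ne_of_gt hy0pos
      have hcne : c ≠ 0 := ne_of_gt hcpos
      have hhalf : (Y / 2) ^ (-(γ / (d:ℝ))) = (2:ℝ) ^ (γ / (d:ℝ)) * Y ^ (-(γ / (d:ℝ))) := by
        rw [Real.div_rpow hy0pos.le (by norm_num : (0:ℝ) ≤ 2),
          Real.rpow_neg (by norm_num : (0:ℝ) ≤ 2)]
        field_simp
      have hsplitY : Y ^ (-1 - γ / (d:ℝ)) = Y⁻¹ * Y ^ (-(γ / (d:ℝ))) := by
        rw [show (-1 - γ / (d:ℝ)) = (-1) + (-(γ / (d:ℝ))) by ring, Real.rpow_add hy0pos,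
          Real.rpow_neg_one]
      have h2split : (2:ℝ) ^ ((1:ℝ) + γ / (d:ℝ)) = 2 * (2:ℝ) ^ (γ / (d:ℝ)) := by
        rw [Real.rpow_add two_pos, Real.rpow_one]
      rw [hhalf, hsplitY, hBdef, h2split]
      field_simp
    have hpos : 0 < B * Y ^ (-1 - γ / (d:ℝ)) :=
      mul_pos hBpos (Real.rpow_pos_of_pos hy0pos _)
    calc ‖deriv (fun z => h (Function.update y 0 z)) (y 0)‖
        ≤ K * (Y / 2) ^ (-(γ / (d:ℝ))) / (c * Y / 2) := hcd
      _ = B * Y ^ (-1 - γ / (d:ℝ)) := harith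
      _ < 2 * B * Y ^ (-1 - γ / (d:ℝ)) := by linarith [hpos]
end
end

section
/- Asymptotics of the Fatou coordinate. Under the hypotheses of the one-dimensional Fatou coordinate lemma, the limit function β_w : V_w → ℂ satisfies lim_{z→∞, z∈V_w} β_w(z)/z = 1. -/
/-!
Asymptotics of the Fatou coordinate: under the hypotheses of the one-dimensional
Fatou coordinate lemma, the limit `β_w` satisfies `β_w(z)/z → 1` as `z → ∞` in `V_w`.
-/

noncomputable section

open Complex Filter Topology Set Function Bornology

/-- The fiber domain `V_w = {z ∈ ℂ : R < |z|, |arg z| < θ}`. -/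
def Vfiber (R θ : ℝ) : Set ℂ := {z | R < ‖z‖ ∧ |Complex.arg z| < θ}

set_option maxHeartbeats 1000000 in
theorem fatou_coordinate_asymptotics
    (θ R γ d K K' : ℝ)
    (hθ : 0 < θ) (hθ' : θ < Real.pi / 2) (hR : 0 < R)
    (hγ : 0 < γ) (hd : 1 ≤ d) (hK : 0 < K) (hK' : 0 < K')
    (fw hw : ℂ → ℂ)
    (hform : ∀ z ∈ Vfiber R θ, fw z = z + 1 + hw z)
    (hmaps : MapsTo fw (Vfiber R θ) (Vfiber R θ))
    (hdiff : ∀ z ∈ Vfiber R θ, DifferentiableAt ℂ hw z)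
    (hbound : ∀ z ∈ Vfiber R θ, ‖hw z‖ ≤ K * ‖z‖ ^ (-(γ / d)))
    (hderiv : ∀ z ∈ Vfiber R θ, ‖deriv hw z‖ ≤ K' * ‖z‖ ^ (-1 - γ / d))
    (hgrow : ∀ z ∈ Vfiber R θ, ‖z‖ + 1 / 2 < ‖fw z‖)
    (p : ℂ) (hp : p ∈ Vfiber R θ)
    (hseg : ∀ z ∈ Vfiber R θ, segment ℝ z p ⊆ Vfiber R θ)
    (β : ℂ → ℂ)
    (hβ : TendstoUniformlyOn (fun j z => fw^[j] z - fw^[j] p) β atTop (Vfiber R θ)) :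
    Tendsto (fun z => β z / z) (cobounded ℂ ⊓ 𝓟 (Vfiber R θ)) (𝓝 1) := by
  set V := Vfiber R θ with hV
  have hd0 : (0:ℝ) < d := lt_of_lt_of_le zero_lt_one hd
  set e : ℝ := γ / (2 * d) with he_def
  have he : 0 < e := by positivity
  have h2e : γ / d = 2 * e := by rw [he_def]; field_simp
  -- positivity of norms on V
  have hnorm : ∀ z ∈ V, R < ‖z‖ := fun z hz => by
    simpa using hz.1
  have hnorm0 : ∀ z ∈ V, 0 < ‖z‖ := fun z hz => hR.trans (hnorm z hz)
  -- V is open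
  have hVopen : IsOpen V := by
    rw [isOpen_iff_mem_nhds]
    intro z hz
    have hz0 : z ≠ 0 := by
      intro h; rw [h] at hz; simp [hV, Vfiber] at hz; linarith [hz.1]
    have hre0 : 0 < z.re := by
      have h1 : Real.cos (Complex.arg z) = z.re / ‖z‖ := Complex.cos_arg hz0
      have h2 : 0 < Real.cos (Complex.arg z) := by
        apply Real.cos_pos_of_mem_Ioo
        constructor
        · have := abs_lt.1 hz.2; linarith [this.1]
        · have := abs_lt.1 hz.2; linarith [this.2]
      have h3 : 0 < ‖z‖ := by
        simpa using hnorm0 z hz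
      rw [h1] at h2
      exact (div_pos_iff.1 h2).resolve_right (fun h => absurd h.2 (not_lt.2 h3.le)) |>.1
    have e1' : ∀ᶠ w in 𝓝 z, R < ‖w‖ := by
      have : ContinuousAt (fun w => ‖w‖) z := continuous_norm.continuousAt
      exact (continuousAt_const.eventually_lt this hz.1)
    have e2 : ∀ᶠ w in 𝓝 z, |Complex.arg w| < θ := by
      have harg : ContinuousAt (fun w => |Complex.arg w|) z :=
        (Complex.continuousAt_arg (Or.inl hre0)).abs
      exact harg.eventually_lt continuousAt_const hz.2
    exact (e1'.and e2 : ∀ᶠ w in 𝓝 z, w ∈ V)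
  -- lower bound on real part
  have hre : ∀ z ∈ V, Real.cos θ * ‖z‖ ≤ z.re := by
    intro z hz
    have hz0 : z ≠ 0 := by
      intro h; rw [h] at hz; simp [hV, Vfiber] at hz; linarith [hz.1]
    have habs : 0 < ‖z‖ := by simpa using hnorm0 z hz
    have hcc : Real.cos θ ≤ Real.cos (Complex.arg z) := by
      rw [← Real.cos_abs (Complex.arg z)]
      apply Real.cos_le_cos_of_nonneg_of_le_pi (abs_nonneg _)
      · linarith [Real.pi_pos]
      · exact hz.2.le
    have h1 : Real.cos (Complex.arg z) = z.re / ‖z‖ := Complex.cos_arg hz0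
    rw [h1] at hcc
    calc Real.cos θ * ‖z‖ ≤ (z.re / ‖z‖) * ‖z‖ := by
          exact mul_le_mul_of_nonneg_right hcc habs.le
      _ = z.re := by field_simp
  have hc : 0 < Real.cos θ := by
    apply Real.cos_pos_of_mem_Ioo
    constructor <;> [linarith [Real.pi_pos]; linarith]
  set c : ℝ := Real.cos θ with hc_def
  -- iterates stay in V
  have hmem_iter : ∀ z ∈ V, ∀ k, fw^[k] z ∈ V := fun z hz k => hmaps.iterate k hz
  -- norm growth of iterates
  have hnorm_iter : ∀ z ∈ V, ∀ k : ℕ, ‖z‖ + k / 2 ≤ ‖fw^[k] z‖ := by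
    intro z hz k
    induction k with
    | zero => simp
    | succ k ih =>
      rw [Function.iterate_succ_apply']
      have h1 := hgrow _ (hmem_iter z hz k)
      push_cast
      push_cast at ih
      linarith
  -- summability
  have hsum : Summable (fun k : ℕ => (R + (k:ℝ) / 2) ^ (-(1 + e))) := by
    rw [← summable_nat_add_iff 1]
    have hbase : Summable (fun k : ℕ => (((2:ℝ) ^ (-(1+e)))⁻¹) * ((k:ℝ) + 1) ^ (-(1 + e))) := by
      apply Summable.mul_left
      have h1 : Summable (fun k : ℕ => ((k:ℝ)) ^ (-(1 + e))) :=
        Real.summable_nat_rpow.2 (by linarith)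
      have h2 := (summable_nat_add_iff 1).2 h1
      simpa using h2
    apply Summable.of_nonneg_of_le (fun k => by positivity) _ hbase
    intro k
    have h1 : ((k:ℝ) + 1) / 2 ≤ R + (((k + 1) : ℕ) : ℝ) / 2 := by push_cast; linarith
    calc (R + (((k + 1) : ℕ) : ℝ) / 2) ^ (-(1 + e)) ≤ (((k:ℝ) + 1) / 2) ^ (-(1 + e)) :=
          Real.rpow_le_rpow_of_nonpos (by positivity) h1 (by linarith)
      _ = (((2:ℝ) ^ (-(1+e)))⁻¹) * ((k:ℝ) + 1) ^ (-(1 + e)) := by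
          rw [Real.div_rpow (by positivity) (by norm_num)]
          ring
  set S₁ : ℝ := ∑' k : ℕ, (R + (k:ℝ) / 2) ^ (-(1 + e)) with hS₁_def
  have hS₁0 : 0 ≤ S₁ := tsum_nonneg (fun k => by positivity)
  -- splitting the exponent
  have hfac : ∀ x : ℝ, 0 < x → x ^ (-1 - γ / d) = x ^ (-(1 + e)) * x ^ (-e) := by
    intro x hx
    rw [← Real.rpow_add hx]
    congr 1
    rw [h2e]; ring
  -- tail estimate
  have tail : ∀ a : ℝ, R ≤ a → ∀ j : ℕ,
      ∑ k ∈ Finset.range j, (a + (k:ℝ) / 2) ^ (-1 - γ / d) ≤ a ^ (-e) * S₁ := by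
    intro a ha j
    have ha0 : 0 < a := hR.trans_le ha
    calc ∑ k ∈ Finset.range j, (a + (k:ℝ) / 2) ^ (-1 - γ / d)
        ≤ ∑ k ∈ Finset.range j, a ^ (-e) * (R + (k:ℝ) / 2) ^ (-(1 + e)) := by
          apply Finset.sum_le_sum
          intro k _
          rw [hfac _ (by positivity), mul_comm]
          apply mul_le_mul
          · exact Real.rpow_le_rpow_of_nonpos ha0 (le_add_of_nonneg_right (by positivity)) (by linarith)
          · exact Real.rpow_le_rpow_of_nonpos (by positivity) (by linarith) (by linarith)
          · positivity
          · positivity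
      _ = a ^ (-e) * ∑ k ∈ Finset.range j, (R + (k:ℝ) / 2) ^ (-(1 + e)) := by
          rw [Finset.mul_sum]
      _ ≤ a ^ (-e) * S₁ := by
          apply mul_le_mul_of_nonneg_left _ (by positivity)
          exact Summable.sum_le_tsum _ (fun k _ => by positivity) hsum
  set M : ℝ := Real.exp (K' * (R ^ (-e) * S₁)) with hM_def
  have hM0 : 0 < M := Real.exp_pos _
  -- differentiability of fw on V
  have hfd : ∀ z ∈ V, DifferentiableAt ℂ fw z ∧ deriv fw z = 1 + deriv hw z := by
    intro z hz
    have hev : fw =ᶠ[𝓝 z] fun w => w + 1 + hw w :=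
      Filter.eventuallyEq_of_mem (hVopen.mem_nhds hz) hform
    have hda : HasDerivAt (fun w : ℂ => w + 1 + hw w) (1 + deriv hw z) z :=
      ((hasDerivAt_id z).add_const 1).add (hdiff z hz).hasDerivAt
    constructor
    · exact hda.differentiableAt.congr_of_eventuallyEq hev
    · rw [hev.deriv_eq, hda.deriv]
  -- derivative bound on iterates
  have hiter : ∀ k : ℕ, ∀ z ∈ V, DifferentiableAt ℂ (fw^[k]) z ∧
      ‖deriv (fw^[k]) z‖ ≤ Real.exp (K' * ∑ i ∈ Finset.range k, (R + (i:ℝ) / 2) ^ (-1 - γ / d)) := by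
    intro k
    induction k with
    | zero =>
      intro z hz
      constructor
      · simpa using differentiableAt_id'
      · simp
    | succ k ih =>
      intro z hz
      obtain ⟨ihd, ihb⟩ := ih z hz
      have hfk : fw^[k] z ∈ V := hmem_iter z hz k
      obtain ⟨hfwd, hfwderiv⟩ := hfd _ hfk
      have hcomp : fw^[k + 1] = fw ∘ fw^[k] := Function.iterate_succ' fw k
      constructor
      · rw [hcomp]; exact hfwd.comp z ihd
      · rw [hcomp, deriv_comp (x := z) hfwd ihd]
        have hfknorm : R + (k:ℝ) / 2 ≤ ‖fw^[k] z‖ := by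
          have := hnorm_iter z hz k
          have := hnorm z hz
          linarith
        have hstep : ‖deriv fw (fw^[k] z)‖ ≤ Real.exp (K' * (R + (k:ℝ) / 2) ^ (-1 - γ / d)) := by
          rw [hfwderiv]
          calc ‖(1 : ℂ) + deriv hw (fw^[k] z)‖ ≤ ‖(1:ℂ)‖ + ‖deriv hw (fw^[k] z)‖ := norm_add_le _ _
            _ ≤ 1 + K' * ‖fw^[k] z‖ ^ (-1 - γ / d) := by
                rw [norm_one]
                exact add_le_add_right (hderiv _ hfk) 1
            _ ≤ 1 + K' * (R + (k:ℝ) / 2) ^ (-1 - γ / d) := by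
                have : ‖fw^[k] z‖ ^ (-1 - γ / d) ≤ (R + (k:ℝ) / 2) ^ (-1 - γ / d) := by
                  apply Real.rpow_le_rpow_of_nonpos (by positivity) hfknorm
                  have : 0 ≤ γ / d := by positivity
                  linarith
                nlinarith [hK'.le]
            _ ≤ Real.exp (K' * (R + (k:ℝ) / 2) ^ (-1 - γ / d)) := by
                have := Real.add_one_le_exp (K' * (R + (k:ℝ) / 2) ^ (-1 - γ / d))
                linarith
        calc ‖deriv fw (fw^[k] z) * deriv (fw^[k]) z‖ = ‖deriv fw (fw^[k] z)‖ * ‖deriv (fw^[k]) z‖ :=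
              norm_mul _ _
          _ ≤ Real.exp (K' * (R + (k:ℝ) / 2) ^ (-1 - γ / d)) *
              Real.exp (K' * ∑ i ∈ Finset.range k, (R + (i:ℝ) / 2) ^ (-1 - γ / d)) := by
              apply mul_le_mul hstep ihb (norm_nonneg _) (Real.exp_pos _).le
          _ = Real.exp (K' * ∑ i ∈ Finset.range (k + 1), (R + (i:ℝ) / 2) ^ (-1 - γ / d)) := by
              rw [← Real.exp_add]
              congr 1
              rw [Finset.sum_range_succ]
              ring
  have hiterM : ∀ k : ℕ, ∀ z ∈ V, ‖deriv (fw^[k]) z‖ ≤ M := by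
    intro k z hz
    refine (hiter k z hz).2.trans ?_
    rw [hM_def]
    apply Real.exp_le_exp.2
    exact mul_le_mul_of_nonneg_left (tail R le_rfl k) hK'.le
  -- telescoping identity
  have htel : ∀ u ∈ V, ∀ j : ℕ, fw^[j] u = u + j + ∑ k ∈ Finset.range j, hw (fw^[k] u) := by
    intro u hu j
    induction j with
    | zero => simp
    | succ j ihj =>
      rw [Function.iterate_succ_apply', hform _ (hmem_iter u hu j), Finset.sum_range_succ]
      nth_rewrite 1 [ihj]
      push_cast
      ring
  -- the key estimate
  have key : ∀ a : ℝ, R ≤ a → ∀ z ∈ V, ∀ z' ∈ V, segment ℝ z' z ⊆ V →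
      (∀ w ∈ segment ℝ z' z, a ≤ ‖w‖) →
      ‖β z - β z' - (z - z')‖ ≤ M * K' * (a ^ (-e) * S₁) * ‖z - z'‖ := by
    intro a ha z hz z' hz' hsub hlow
    have ha0 : 0 < a := hR.trans_le ha
    -- step 1: bound for each iterate
    have step1 : ∀ j : ℕ, ‖fw^[j] z - fw^[j] z' - (z - z')‖ ≤ M * K' * (a ^ (-e) * S₁) * ‖z - z'‖ := by
      intro j
      have hid : fw^[j] z - fw^[j] z' - (z - z') =
          ∑ k ∈ Finset.range j, (hw (fw^[k] z) - hw (fw^[k] z')) := by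
        rw [htel z hz j, htel z' hz' j, Finset.sum_sub_distrib]
        ring
      rw [hid]
      have hterm : ∀ k ∈ Finset.range j, ‖hw (fw^[k] z) - hw (fw^[k] z')‖ ≤
          M * K' * (a + (k:ℝ) / 2) ^ (-1 - γ / d) * ‖z - z'‖ := by
        intro k _
        set s : Set ℂ := segment ℝ z' z with hs_def
        have hconv : Convex ℝ s := convex_segment _ _
        have hCbound : ∀ w ∈ s, ‖deriv hw (fw^[k] w) * deriv (fw^[k]) w‖ ≤
            M * K' * (a + (k:ℝ) / 2) ^ (-1 - γ / d) := by
          intro w hw'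
          have hwV : w ∈ V := hsub hw'
          have hfkw : fw^[k] w ∈ V := hmem_iter w hwV k
          have hwa : a ≤ ‖w‖ := hlow w hw'
          have hfka : a + (k:ℝ) / 2 ≤ ‖fw^[k] w‖ := by
            have := hnorm_iter w hwV k
            linarith
          rw [norm_mul]
          calc ‖deriv hw (fw^[k] w)‖ * ‖deriv (fw^[k]) w‖
              ≤ (K' * (a + (k:ℝ) / 2) ^ (-1 - γ / d)) * M := by
                apply mul_le_mul _ (hiterM k w hwV) (norm_nonneg _) (by positivity)
                refine (hderiv _ hfkw).trans ?_
                apply mul_le_mul_of_nonneg_left _ hK'.le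
                apply Real.rpow_le_rpow_of_nonpos (by positivity) hfka
                have : 0 ≤ γ / d := by positivity
                linarith
            _ = M * K' * (a + (k:ℝ) / 2) ^ (-1 - γ / d) := by ring
        have hfderiv : ∀ w ∈ s, HasFDerivWithinAt (hw ∘ fw^[k])
            ((1 : ℂ →L[ℂ] ℂ).smulRight (deriv hw (fw^[k] w) * deriv (fw^[k]) w)) s w := by
          intro w hw'
          have hwV : w ∈ V := hsub hw'
          have hfkw : fw^[k] w ∈ V := hmem_iter w hwV k
          have hda : HasDerivAt (hw ∘ fw^[k]) (deriv hw (fw^[k] w) * deriv (fw^[k]) w) w :=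
            HasDerivAt.comp w (hdiff _ hfkw).hasDerivAt (hiter k w hwV).1.hasDerivAt
          exact hda.hasFDerivAt.hasFDerivWithinAt
        have hnormbd : ∀ w ∈ s, ‖(1 : ℂ →L[ℂ] ℂ).smulRight (deriv hw (fw^[k] w) * deriv (fw^[k]) w)‖ ≤
            M * K' * (a + (k:ℝ) / 2) ^ (-1 - γ / d) := by
          intro w hw'
          rw [ContinuousLinearMap.norm_smulRight_apply]
          simpa using hCbound w hw'
        have := Convex.norm_image_sub_le_of_norm_hasFDerivWithin_le hfderiv hnormbd hconv
          (left_mem_segment ℝ z' z) (right_mem_segment ℝ z' z)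
        simpa using this
      calc ‖∑ k ∈ Finset.range j, (hw (fw^[k] z) - hw (fw^[k] z'))‖
          ≤ ∑ k ∈ Finset.range j, ‖hw (fw^[k] z) - hw (fw^[k] z')‖ := norm_sum_le _ _
        _ ≤ ∑ k ∈ Finset.range j, M * K' * (a + (k:ℝ) / 2) ^ (-1 - γ / d) * ‖z - z'‖ :=
            Finset.sum_le_sum hterm
        _ = (M * K' * ‖z - z'‖) * ∑ k ∈ Finset.range j, (a + (k:ℝ) / 2) ^ (-1 - γ / d) := by
            rw [Finset.mul_sum]
            apply Finset.sum_congr rfl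
            intro k _
            ring
        _ ≤ (M * K' * ‖z - z'‖) * (a ^ (-e) * S₁) := by
            apply mul_le_mul_of_nonneg_left (tail a ha j) (by positivity)
        _ = M * K' * (a ^ (-e) * S₁) * ‖z - z'‖ := by ring
    -- step 2: pass to the limit
    have hlim : Tendsto (fun j : ℕ => fw^[j] z - fw^[j] z') atTop (𝓝 (β z - β z')) := by
      have h1 := hβ.tendsto_at hz
      have h2 := hβ.tendsto_at hz'
      have := h1.sub h2
      simpa [sub_sub_sub_cancel_right] using this
    have hlim2 : Tendsto (fun j : ℕ => ‖fw^[j] z - fw^[j] z' - (z - z')‖) atTop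
        (𝓝 ‖β z - β z' - (z - z')‖) := ((hlim.sub_const (z - z')).norm)
    exact le_of_tendsto hlim2 (Filter.Eventually.of_forall step1)
  -- β p = 0
  have hβp : β p = 0 := by
    have h1 : Tendsto (fun j : ℕ => fw^[j] p - fw^[j] p) atTop (𝓝 (β p)) := hβ.tendsto_at hp
    have h2 : Tendsto (fun _ : ℕ => (0:ℂ)) atTop (𝓝 (0:ℂ)) := tendsto_const_nhds
    exact tendsto_nhds_unique (by simpa using h1) h2
  -- constants for the final bound
  set P : ℝ := ‖p‖ with hP_def
  have hP0 : 0 ≤ P := norm_nonneg p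
  set C1 : ℝ := M * K' * S₁ with hC1_def
  set C2 : ℝ := M * K' * (R ^ (-e) * S₁) with hC2_def
  have hC10 : 0 ≤ C1 := mul_nonneg (by positivity) hS₁0
  have hC20 : 0 ≤ C2 := mul_nonneg (by positivity) (mul_nonneg (by positivity) hS₁0)
  set H : ℝ → ℝ := fun r => (2*C1*(c/2)^(-e)) * r^(-(e/2)) + (2*C2) * r^(-(1/2 : ℝ))
      + (2*P) * r^(-(1:ℝ)) with hH_def
  -- the main pointwise bound
  have main : ∀ z ∈ V, max 1 ((2*P+2)^2) ≤ ‖z - p‖ → ‖β z / z - 1‖ ≤ H ‖z - p‖ := by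
    intro z hz hrge
    set r : ℝ := ‖z - p‖ with hr_def
    have hr1 : 1 ≤ r := le_trans (le_max_left _ _) hrge
    have hr2 : (2*P+2)^2 ≤ r := le_trans (le_max_right _ _) hrge
    have hr0 : 0 < r := by linarith
    set q : ℝ := Real.sqrt r with hq_def
    have hq1 : 1 ≤ q := Real.one_le_sqrt.2 hr1
    have hq0 : 0 < q := by linarith
    have hqq : q * q = r := Real.mul_self_sqrt hr0.le
    have hq2 : 2*P + 2 ≤ q := by
      have h1 : Real.sqrt ((2*P+2)^2) ≤ q := Real.sqrt_le_sqrt hr2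
      rwa [Real.sqrt_sq (by positivity)] at h1
    have hqr : q ≤ r := by
      calc q = q * 1 := (mul_one q).symm
        _ ≤ q * q := mul_le_mul_of_nonneg_left hq1 (by linarith)
        _ = r := hqq
    set t : ℝ := q / r with ht_def
    have ht0 : 0 < t := by positivity
    have ht1 : t ≤ 1 := by rw [ht_def]; exact div_le_one_of_le₀ hqr hr0.le
    set z₀ : ℂ := p + (t : ℝ) • (z - p) with hz₀_def
    have hz₀seg : z₀ ∈ segment ℝ z p := by
      refine ⟨t, 1 - t, ht0.le, by linarith, by ring, ?_⟩
      rw [hz₀_def]; module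
    have hz₀V : z₀ ∈ V := hseg z hz hz₀seg
    have hz₀p : ‖z₀ - p‖ = q := by
      have h1 : z₀ - p = t • (z - p) := by rw [hz₀_def]; ring
      rw [h1, norm_smul, Real.norm_eq_abs, abs_of_pos ht0, ← hr_def, ht_def]
      field_simp
    have hzz₀ : ‖z - z₀‖ ≤ r := by
      have h1 : z - z₀ = (1 - t) • (z - p) := by rw [hz₀_def]; module
      have hnn : (0:ℝ) ≤ 1 - t := by linarith
      rw [h1, norm_smul, Real.norm_eq_abs, _root_.abs_of_nonneg hnn, ← hr_def]
      have h2 : (1 - t) * r ≤ 1 * r := mul_le_mul_of_nonneg_right (by linarith) hr0.le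
      linarith
    have hz₀n : q / 2 ≤ ‖z₀‖ := by
      have h1 : ‖z₀ - p‖ ≤ ‖z₀‖ + ‖p‖ := norm_sub_le _ _
      rw [hz₀p] at h1
      have : P ≤ q / 2 := by linarith
      linarith
    have hzn : r / 2 ≤ ‖z‖ := by
      have h1 : ‖z - p‖ ≤ ‖z‖ + ‖p‖ := norm_sub_le _ _
      rw [← hr_def] at h1
      have : P ≤ r / 2 := by nlinarith [hr2, hP0, sq_nonneg P]
      linarith
    have hsub2 : segment ℝ z₀ z ⊆ segment ℝ z p :=
      (convex_segment z p).segment_subset hz₀seg (left_mem_segment ℝ z p)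
    have hsubV : segment ℝ z₀ z ⊆ V := fun w hw' => hseg z hz (hsub2 hw')
    set a : ℝ := max R (c/2 * q) with ha_def
    have haR : R ≤ a := le_max_left _ _
    have hlow : ∀ w ∈ segment ℝ z₀ z, a ≤ ‖w‖ := by
      intro w hw'
      apply max_le (hnorm w (hsubV hw')).le
      obtain ⟨u, v, hu, hv, huv, rfl⟩ := hw'
      have h1 : c/2 * q ≤ z₀.re := by
        have ha1 := hre z₀ hz₀V
        have ha2 : c * (q/2) ≤ c * ‖z₀‖ := mul_le_mul_of_nonneg_left hz₀n hc.le
        linarith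
      have h2 : c/2 * q ≤ z.re := by
        have ha1 := hre z hz
        have ha2 : c * (q/2) ≤ c * ‖z‖ := mul_le_mul_of_nonneg_left (by linarith) hc.le
        linarith
      have hrew : (u • z₀ + v • z).re = u * z₀.re + v * z.re := by
        simp [Complex.add_re, Complex.real_smul, Complex.mul_re]
      have h3 : c/2*q ≤ (u • z₀ + v • z).re := by
        rw [hrew]
        have e1 : u*(c/2*q) ≤ u*z₀.re := mul_le_mul_of_nonneg_left h1 hu
        have e2 : v*(c/2*q) ≤ v*z.re := mul_le_mul_of_nonneg_left h2 hv
        have e3 : u*(c/2*q) + v*(c/2*q) = c/2*q := by rw [← add_mul, huv, one_mul]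
        linarith
      exact h3.trans (Complex.re_le_norm _)
    -- two applications of the key estimate
    have hA : ‖β z - β z₀ - (z - z₀)‖ ≤ C1 * (c/2*q)^(-e) * r := by
      refine (key a haR z hz z₀ hz₀V hsubV hlow).trans ?_
      have h1 : a ^ (-e) ≤ (c/2*q) ^ (-e) :=
        Real.rpow_le_rpow_of_nonpos (by positivity) (le_max_right _ _) (by linarith)
      calc M * K' * (a^(-e) * S₁) * ‖z - z₀‖ ≤ M * K' * ((c/2*q)^(-e) * S₁) * r := by
            apply mul_le_mul
              (mul_le_mul_of_nonneg_left (mul_le_mul_of_nonneg_right h1 hS₁0) (by positivity))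
              hzz₀ (norm_nonneg _)
              (mul_nonneg (by positivity) (mul_nonneg (by positivity) hS₁0))
        _ = C1 * (c/2*q)^(-e) * r := by rw [hC1_def]; ring
    have hB : ‖β z₀ - β p - (z₀ - p)‖ ≤ C2 * q := by
      have hsegp : segment ℝ p z₀ ⊆ V := by rw [segment_symm]; exact hseg z₀ hz₀V
      have hlowp : ∀ w ∈ segment ℝ p z₀, R ≤ ‖w‖ := fun w hw' => (hnorm w (hsegp hw')).le
      refine (key R le_rfl z₀ hz₀V p hp hsegp hlowp).trans ?_
      rw [hz₀p, hC2_def]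
    have hnb : ‖β z - z‖ ≤ C1 * (c/2*q)^(-e) * r + C2 * q + P := by
      have hsplit : β z - z = (β z - β z₀ - (z - z₀)) + (β z₀ - β p - (z₀ - p)) + (β p - p) := by
        ring
      rw [hsplit]
      refine (norm_add₃_le).trans ?_
      have h3 : ‖β p - p‖ = P := by rw [hβp]; simp [hP_def]
      rw [h3]
      exact add_le_add (add_le_add hA hB) le_rfl
    have hz_ne : z ≠ 0 := by
      intro h
      have h1 := hnorm0 z hz
      rw [h] at h1
      simp at h1
    have hdiv : ‖β z / z - 1‖ = ‖β z - z‖ / ‖z‖ := by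
      have h1 : β z / z - 1 = (β z - z) / z := by field_simp
      rw [h1, norm_div]
    have hbound2 : ‖β z - z‖ / ‖z‖ ≤ (C1 * (c/2*q)^(-e) * r + C2 * q + P) / (r/2) := by
      apply div_le_div₀ _ hnb (by linarith) hzn
      have e1 : (0:ℝ) ≤ C1 * (c/2*q)^(-e) * r := mul_nonneg (mul_nonneg hC10 (by positivity)) hr0.le
      have e2 : (0:ℝ) ≤ C2 * q := mul_nonneg hC20 (by linarith)
      linarith
    have hq_rpow : q = r ^ ((1:ℝ)/2) := by rw [hq_def, Real.sqrt_eq_rpow]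
    have h1 : ((c/2)*q)^(-e) = (c/2)^(-e) * r^(-(e/2)) := by
      rw [Real.mul_rpow (by positivity) (by positivity), hq_rpow, ← Real.rpow_mul hr0.le,
        show ((1:ℝ)/2 * -e) = -(e/2) by ring]
    have h2 : r ^ (-(1/2):ℝ) = q / r := by
      rw [show (-(1/2):ℝ) = 1/2 - 1 by norm_num, Real.rpow_sub hr0, Real.rpow_one, ← hq_rpow]
    have heq : (C1 * (c/2*q)^(-e) * r + C2 * q + P) / (r/2) = H r := by
      rw [hH_def]
      simp only []
      rw [h1, h2, Real.rpow_neg_one]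
      field_simp
    rw [hdiv, ← heq]
    exact hbound2
  -- assemble the limit
  have hrt : Tendsto (fun z : ℂ => ‖z - p‖) (cobounded ℂ ⊓ 𝓟 V) atTop := by
    apply tendsto_atTop_mono (fun z => norm_sub_norm_le z p)
    have h1 : Tendsto (fun z : ℂ => ‖z‖) (cobounded ℂ ⊓ 𝓟 V) atTop :=
      tendsto_norm_cobounded_atTop.mono_left inf_le_left
    simpa [hP_def, sub_eq_add_neg] using tendsto_atTop_add_const_right _ (-P) h1
  have hHt : Tendsto H atTop (𝓝 0) := by
    rw [hH_def]
    have t1 : Tendsto (fun r:ℝ => (2*C1*(c/2)^(-e)) * r^(-(e/2))) atTop (𝓝 0) := by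
      simpa using (tendsto_rpow_neg_atTop (by positivity : (0:ℝ) < e/2)).const_mul
        (2*C1*(c/2)^(-e))
    have t2 : Tendsto (fun r:ℝ => (2*C2) * r^(-(1/2:ℝ))) atTop (𝓝 0) := by
      simpa using (tendsto_rpow_neg_atTop (by norm_num : (0:ℝ) < 1/2)).const_mul (2*C2)
    have t3 : Tendsto (fun r:ℝ => (2*P) * r^(-(1:ℝ))) atTop (𝓝 0) := by
      simpa using (tendsto_rpow_neg_atTop (by norm_num : (0:ℝ) < 1)).const_mul (2*P)
    simpa using (t1.add t2).add t3
  have hever : ∀ᶠ z in cobounded ℂ ⊓ 𝓟 V, ‖β z / z - 1‖ ≤ H ‖z - p‖ := by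
    have h1 : ∀ᶠ z in cobounded ℂ ⊓ 𝓟 V, max 1 ((2*P+2)^2) ≤ ‖z - p‖ :=
      hrt.eventually_ge_atTop _
    have h2 : ∀ᶠ z in cobounded ℂ ⊓ 𝓟 V, z ∈ V := by
      rw [eventually_inf_principal]
      exact Filter.Eventually.of_forall (fun z h => h)
    filter_upwards [h1, h2] with z hz1 hz2
    exact main z hz2 hz1
  have hfinal : Tendsto (fun z => β z / z - 1) (cobounded ℂ ⊓ 𝓟 V) (𝓝 0) :=
    squeeze_zero_norm' hever (hHt.comp hrt)
  have hone : Tendsto (fun _ : ℂ => (1:ℂ)) (cobounded ℂ ⊓ 𝓟 V) (𝓝 1) := tendsto_const_nhds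
  have := hfinal.add hone
  simpa using this
end
end
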